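/- arXiv:2509.02005 — 10 statements merged into one kernel-verified Lean document; each statement's English description precedes it below -/
import Mathlib

section
/- Let H be a real Hilbert space, B : H → H an L-Lipschitz map with L > 0, and (x_k)_{k≥0} any sequence in H. Fix constants 0 < c₁ < c₂, an initial value λ₀ > 0, and a summable sequence (γ_k)_{k≥0} of nonnegative reals, and define λ_k for k ≥ 1 by the adaptive rule: λ_k = c₁‖x_{k−1} − x_k‖/‖B x_{k−1} − B x_k‖ if ‖B x_{k−1} − B x_k‖ > (c₂/λ_{k−1})‖x_{k−1} − x_k‖, and λ_k = (1 + γ_{k−1}) λ_{k−1} otherwise. Then the sequence (λ_k) converges, and λ_k ≥ min{c₁/L, λ₀} > 0 for all k ≥ 0. -/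
open Filter

/-- Lemma 3.2(1) of Hoai, as used in the paper: the adaptive step-size
sequence converges and is bounded below by `min (c₁ / L) (lam 0) > 0`. -/
theorem adaptive_stepsize_converges_and_bounded_below
    {H : Type*} [NormedAddCommGroup H] [InnerProductSpace ℝ H]
    (B : H → H) (L : ℝ) (hL : 0 < L)
    (hLip : ∀ x y : H, ‖B x - B y‖ ≤ L * ‖x - y‖)
    (x : ℕ → H) (c₁ c₂ : ℝ) (hc₁ : 0 < c₁) (hc₁₂ : c₁ < c₂)
    (γ : ℕ → ℝ) (hγ : ∀ k, 0 ≤ γ k) (hγsum : Summable γ)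
    (lam : ℕ → ℝ) (hlam0 : 0 < lam 0)
    (hrule : ∀ k : ℕ,
      lam (k + 1) =
        if (c₂ / lam k) * ‖x k - x (k + 1)‖ < ‖B (x k) - B (x (k + 1))‖ then
          c₁ * ‖x k - x (k + 1)‖ / ‖B (x k) - B (x (k + 1))‖
        else (1 + γ k) * lam k) :
    (∃ l : ℝ, Tendsto lam atTop (nhds l)) ∧
      0 < min (c₁ / L) (lam 0) ∧ ∀ k : ℕ, min (c₁ / L) (lam 0) ≤ lam k := by
  set m := min (c₁ / L) (lam 0) with hm
  have hmpos : 0 < m := lt_min (div_pos hc₁ hL) hlam0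
  -- lower bound
  have hlow : ∀ k, m ≤ lam k := by
    intro k
    induction k with
    | zero => exact min_le_right _ _
    | succ k ih =>
      rw [hrule k]
      split_ifs with h
      · have hlamk : 0 < lam k := lt_of_lt_of_le hmpos ih
        have hBpos : 0 < ‖B (x k) - B (x (k + 1))‖ :=
          lt_of_le_of_lt (mul_nonneg (div_nonneg (by linarith) hlamk.le) (norm_nonneg _)) h
        refine le_trans (min_le_left _ _) ?_
        rw [div_le_div_iff₀ hL hBpos]
        calc c₁ * ‖B (x k) - B (x (k + 1))‖
            ≤ c₁ * (L * ‖x k - x (k + 1)‖) := by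
              exact mul_le_mul_of_nonneg_left (hLip _ _) hc₁.le
          _ = c₁ * ‖x k - x (k + 1)‖ * L := by ring
      · calc m ≤ lam k := ih
          _ = 1 * lam k := (one_mul _).symm
          _ ≤ (1 + γ k) * lam k := by
              apply mul_le_mul_of_nonneg_right _ (lt_of_lt_of_le hmpos ih).le
              linarith [hγ k]
  -- upper recursive bound
  have hup : ∀ k, lam (k + 1) ≤ (1 + γ k) * lam k := by
    intro k
    have hlamk : 0 < lam k := lt_of_lt_of_le hmpos (hlow k)
    rw [hrule k]
    split_ifs with h
    · have hBpos : 0 < ‖B (x k) - B (x (k + 1))‖ :=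
        lt_of_le_of_lt (mul_nonneg (div_nonneg (by linarith) hlamk.le) (norm_nonneg _)) h
      have h2 : c₂ * ‖x k - x (k + 1)‖ < lam k * ‖B (x k) - B (x (k + 1))‖ := by
        have h3 := mul_lt_mul_of_pos_right h hlamk
        rw [div_mul_eq_mul_div, div_mul_cancel₀ _ hlamk.ne'] at h3
        linarith
      have : c₁ * ‖x k - x (k + 1)‖ ≤ lam k * ‖B (x k) - B (x (k + 1))‖ := by
        have hx : 0 ≤ ‖x k - x (k + 1)‖ := norm_nonneg _
        nlinarith
      calc c₁ * ‖x k - x (k + 1)‖ / ‖B (x k) - B (x (k + 1))‖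
          ≤ lam k := by rw [div_le_iff₀ hBpos]; linarith
        _ = 1 * lam k := (one_mul _).symm
        _ ≤ (1 + γ k) * lam k := by
            apply mul_le_mul_of_nonneg_right _ hlamk.le
            linarith [hγ k]
    · exact le_refl _
  refine ⟨?_, hmpos, hlow⟩
  -- partial products
  set P : ℕ → ℝ := fun k => ∏ i ∈ Finset.range k, (1 + γ i) with hP
  have hPpos : ∀ k, 0 < P k := by
    intro k
    apply Finset.prod_pos
    intro i _
    linarith [hγ i]
  have hPmono : Monotone P := by
    apply monotone_nat_of_le_succ
    intro k
    have : P (k + 1) = P k * (1 + γ k) := Finset.prod_range_succ _ _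
    rw [this]
    nth_rewrite 1 [← mul_one (P k)]
    apply mul_le_mul_of_nonneg_left _ (hPpos k).le
    linarith [hγ k]
  have hPbdd : ∀ k, P k ≤ Real.exp (∑' i, γ i) := by
    intro k
    calc P k ≤ ∏ i ∈ Finset.range k, Real.exp (γ i) := by
          apply Finset.prod_le_prod
          · intro i _; linarith [hγ i]
          · intro i _; linarith [Real.add_one_le_exp (γ i)]
      _ = Real.exp (∑ i ∈ Finset.range k, γ i) := by
          rw [Real.exp_sum]
      _ ≤ Real.exp (∑' i, γ i) := by
          apply Real.exp_le_exp.mpr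
          exact Summable.sum_le_tsum (Finset.range k) (fun i _ => hγ i) hγsum
  have hPconv : Tendsto P atTop (nhds (⨆ k, P k)) := by
    apply tendsto_atTop_ciSup hPmono
    exact ⟨Real.exp (∑' i, γ i), by rintro y ⟨k, rfl⟩; exact hPbdd k⟩
  -- μ k = lam k / P k is antitone and bounded below
  set μ : ℕ → ℝ := fun k => lam k / P k with hμ
  have hμanti : Antitone μ := by
    apply antitone_nat_of_succ_le
    intro k
    have h1 : P (k + 1) = P k * (1 + γ k) := Finset.prod_range_succ _ _
    have hg : (0:ℝ) < 1 + γ k := by linarith [hγ k]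
    show lam (k + 1) / P (k + 1) ≤ lam k / P k
    rw [h1, div_le_div_iff₀ (mul_pos (hPpos k) hg) (hPpos k)]
    calc lam (k + 1) * P k ≤ ((1 + γ k) * lam k) * P k :=
          mul_le_mul_of_nonneg_right (hup k) (hPpos k).le
      _ = lam k * (P k * (1 + γ k)) := by ring
  have hμbdd : BddBelow (Set.range μ) := by
    refine ⟨0, ?_⟩
    rintro y ⟨k, rfl⟩
    exact div_nonneg (lt_of_lt_of_le hmpos (hlow k)).le (hPpos k).le
  have hμconv : Tendsto μ atTop (nhds (⨅ k, μ k)) :=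
    tendsto_atTop_ciInf hμanti hμbdd
  refine ⟨(⨅ k, μ k) * (⨆ k, P k), ?_⟩
  have : lam = fun k => μ k * P k := by
    funext k
    simp [hμ, div_mul_cancel₀ _ (hPpos k).ne']
  rw [this]
  exact hμconv.mul hPconv
end

section
/- Let H be a real Hilbert space, B : H → H an L-Lipschitz map with L > 0, and (x_k)_{k≥0} any sequence in H. Fix constants 0 < c₁ < c₂, an initial value λ₀ > 0, and a summable sequence (γ_k)_{k≥0} of strictly positive reals, and define λ_k for k ≥ 1 by the adaptive rule: λ_k = c₁‖x_{k−1} − x_k‖/‖B x_{k−1} − B x_k‖ if ‖B x_{k−1} − B x_k‖ > (c₂/λ_{k−1})‖x_{k−1} − x_k‖, and λ_k = (1 + γ_{k−1}) λ_{k−1} otherwise. Then there exists a positive integer k̃ such that λ_{k+1} > λ_k for all k ≥ k̃. -/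
open Filter

/-- Lemma 3.2(2) of Hoai, as used in the paper: with strictly positive
summable `γ`, the adaptive step-size sequence is eventually strictly
increasing. -/
theorem adaptive_stepsize_eventually_strictly_increasing
    {H : Type*} [NormedAddCommGroup H] [InnerProductSpace ℝ H]
    (B : H → H) (L : ℝ) (hL : 0 < L)
    (hLip : ∀ x y : H, ‖B x - B y‖ ≤ L * ‖x - y‖)
    (x : ℕ → H) (c₁ c₂ : ℝ) (hc₁ : 0 < c₁) (hc₁₂ : c₁ < c₂)
    (γ : ℕ → ℝ) (hγ : ∀ k, 0 < γ k) (hγsum : Summable γ)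
    (lam : ℕ → ℝ) (hlam0 : 0 < lam 0)
    (hrule : ∀ k : ℕ,
      lam (k + 1) =
        if (c₂ / lam k) * ‖x k - x (k + 1)‖ < ‖B (x k) - B (x (k + 1))‖ then
          c₁ * ‖x k - x (k + 1)‖ / ‖B (x k) - B (x (k + 1))‖
        else (1 + γ k) * lam k) :
    ∃ ktilde : ℕ, 0 < ktilde ∧ ∀ k : ℕ, ktilde ≤ k → lam k < lam (k + 1) := by
  classical
  set m : ℝ := min (lam 0) (c₁ / L) with hm_def
  have hm : 0 < m := lt_min hlam0 (div_pos hc₁ hL)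
  have hc₂ : 0 < c₂ := hc₁.trans hc₁₂
  -- the branch-1 condition
  set b : ℕ → Prop := fun k =>
    (c₂ / lam k) * ‖x k - x (k + 1)‖ < ‖B (x k) - B (x (k + 1))‖ with hb_def
  -- lower bound on lam
  have hlow : ∀ k, m ≤ lam k := by
    intro k
    induction k with
    | zero => exact min_le_left _ _
    | succ n ih =>
      have hpos : 0 < lam n := lt_of_lt_of_le hm ih
      rw [hrule n]
      by_cases hbn : b n
      · have hB : 0 < ‖B (x n) - B (x (n + 1))‖ :=
          lt_of_le_of_lt (mul_nonneg (le_of_lt (div_pos hc₂ hpos)) (norm_nonneg _)) hbn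
        have hx : 0 < ‖x n - x (n + 1)‖ := by
          by_contra h
          have h0 : ‖x n - x (n + 1)‖ = 0 := le_antisymm (not_lt.1 h) (norm_nonneg _)
          have := hLip (x n) (x (n + 1))
          rw [h0, mul_zero] at this
          exact absurd (lt_of_lt_of_le hB this) (lt_irrefl _)
        rw [if_pos hbn]
        refine le_trans (min_le_right _ _) ?_
        rw [div_le_div_iff₀ hL hB]
        have := hLip (x n) (x (n + 1))
        nlinarith [hc₁.le, this]
      · rw [if_neg hbn]
        nlinarith [hγ n, hpos]
  have hpos : ∀ k, 0 < lam k := fun k => lt_of_lt_of_le hm (hlow k)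
  -- decrease on branch 1
  set r : ℝ := c₂ / c₁ with hr_def
  have hr : 1 < r := (one_lt_div hc₁).2 hc₁₂
  have hr0 : 0 < r := lt_trans one_pos hr
  have hdec : ∀ k, b k → lam (k + 1) * r ≤ lam k := by
    intro k hbk
    have hB : 0 < ‖B (x k) - B (x (k + 1))‖ :=
      lt_of_le_of_lt (mul_nonneg (le_of_lt (div_pos hc₂ (hpos k))) (norm_nonneg _)) hbk
    have hx : 0 < ‖x k - x (k + 1)‖ := by
      by_contra h
      have h0 : ‖x k - x (k + 1)‖ = 0 := le_antisymm (not_lt.1 h) (norm_nonneg _)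
      have := hLip (x k) (x (k + 1))
      rw [h0, mul_zero] at this
      exact absurd (lt_of_lt_of_le hB this) (lt_irrefl _)
    have hrule' := hrule k
    rw [if_pos hbk] at hrule'
    rw [hrule', hr_def, div_mul_div_comm]
    rw [div_le_iff₀ (by positivity)]
    have hcond : c₂ / lam k * ‖x k - x (k + 1)‖ < ‖B (x k) - B (x (k + 1))‖ := hbk
    have h2 : c₂ * ‖x k - x (k + 1)‖ < lam k * ‖B (x k) - B (x (k + 1))‖ := by
      have := (div_lt_iff₀ (hpos k)).1 (by
        rw [div_mul_eq_mul_div] at hcond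
        exact hcond)
      linarith [this]
    nlinarith [hc₁, hB, hpos k]
  -- counting branch-1 events
  set S : ℕ → ℕ := fun n => ((Finset.range n).filter b).card with hS_def
  have hS_succ : ∀ n, b n → S (n + 1) = S n + 1 := by
    intro n hbn
    simp only [hS_def, Finset.range_add_one, Finset.filter_insert, if_pos hbn]
    rw [Finset.card_insert_of_notMem (by simp)]
  have hS_succ' : ∀ n, ¬ b n → S (n + 1) = S n := by
    intro n hbn
    simp only [hS_def, Finset.range_add_one, Finset.filter_insert, if_neg hbn]
  have hS_mono : ∀ {a c : ℕ}, a ≤ c → S a ≤ S c := by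
    intro a c h
    exact Finset.card_le_card (Finset.filter_subset_filter _ (Finset.range_subset_range.2 h))
  -- product bound
  set C : ℝ := Real.exp (∑' k, γ k) with hC_def
  have hprod : ∀ n, (∏ k ∈ Finset.range n, (1 + γ k)) ≤ C := by
    intro n
    have h1 : (∏ k ∈ Finset.range n, (1 + γ k)) ≤ ∏ k ∈ Finset.range n, Real.exp (γ k) := by
      apply Finset.prod_le_prod
      · intro i _; nlinarith [hγ i]
      · intro i _; linarith [Real.add_one_le_exp (γ i)]
    rw [← Real.exp_sum] at h1
    refine h1.trans ?_
    rw [hC_def]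
    exact Real.exp_le_exp.2 (Summable.sum_le_tsum _ (fun i _ => (hγ i).le) hγsum)
  -- key inequality
  have hkey : ∀ n, lam n * r ^ S n ≤ lam 0 * ∏ k ∈ Finset.range n, (1 + γ k) := by
    intro n
    induction n with
    | zero => simp [hS_def]
    | succ n ih =>
      rw [Finset.prod_range_succ]
      by_cases hbn : b n
      · rw [hS_succ n hbn, pow_succ]
        have h1 : lam (n + 1) * (r ^ S n * r) = (lam (n + 1) * r) * r ^ S n := by ring
        rw [h1]
        have h2 : (lam (n + 1) * r) * r ^ S n ≤ lam n * r ^ S n :=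
          mul_le_mul_of_nonneg_right (hdec n hbn) (by positivity)
        refine h2.trans (ih.trans ?_)
        have hp0 : (0:ℝ) ≤ ∏ k ∈ Finset.range n, (1 + γ k) :=
          Finset.prod_nonneg (fun i _ => by nlinarith [hγ i])
        nlinarith [hγ n, mul_nonneg hlam0.le hp0]
      · rw [hS_succ' n hbn]
        have hrule' := hrule n
        rw [if_neg hbn] at hrule'
        rw [hrule']
        have h1 : (1 + γ n) * lam n * r ^ S n = (1 + γ n) * (lam n * r ^ S n) := by ring
        rw [h1]
        have h2 : (1 + γ n) * (lam n * r ^ S n) ≤ (1 + γ n) * (lam 0 * ∏ k ∈ Finset.range n, (1 + γ k)) :=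
          mul_le_mul_of_nonneg_left ih (by nlinarith [hγ n])
        refine h2.trans ?_
        ring_nf
        nlinarith [hγ n]
    -- end induction
  -- S is bounded
  obtain ⟨M, hM⟩ := pow_unbounded_of_one_lt (lam 0 * C / m) hr
  have hSbound : ∀ n, S n < M := by
    intro n
    by_contra h
    push_neg at h
    have h1 : r ^ M ≤ r ^ S n := pow_le_pow_right₀ hr.le h
    have h2 : lam n * r ^ S n ≤ lam 0 * C :=
      (hkey n).trans (mul_le_mul_of_nonneg_left (hprod n) hlam0.le)
    have h3 : m * r ^ S n ≤ lam n * r ^ S n :=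
      mul_le_mul_of_nonneg_right (hlow n) (by positivity)
    have h4 : r ^ S n ≤ lam 0 * C / m := by
      rw [le_div_iff₀ hm]; nlinarith
    nlinarith
  -- the set of branch-1 indices is finite
  have hT : {k | b k}.Finite := by
    have hinj : Set.InjOn S {k | b k} := by
      have hsm : StrictMonoOn S {k | b k} := by
        intro a ha c hc hac
        have : S a + 1 = S (a + 1) := (hS_succ a ha).symm
        have h2 : S (a + 1) ≤ S c := hS_mono (Nat.succ_le_of_lt hac)
        omega
      exact hsm.injOn
    have himg : S '' {k | b k} ⊆ Set.Iic M := by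
      rintro y ⟨k, _, rfl⟩
      exact (hSbound (k)).le
    exact Set.Finite.of_finite_image ((Set.finite_Iic M).subset himg) hinj
  obtain ⟨N, hN⟩ := hT.bddAbove
  refine ⟨N + 1, Nat.succ_pos N, fun k hk => ?_⟩
  have hbk : ¬ b k := by
    intro hbk
    have := hN hbk
    omega
  have hrule' := hrule k
  rw [if_neg hbk] at hrule'
  rw [hrule']
  nlinarith [hγ k, hpos k]
end

section
/- Let H be a real Hilbert space, B : H → H an L-Lipschitz map with L > 0, and (x_k)_{k≥0} any sequence in H. Fix constants 0 < c₁ < c₂, an initial value λ₀ > 0, and a summable sequence (γ_k)_{k≥0} of nonnegative reals, and define λ_k for k ≥ 1 by the adaptive rule: λ_k = c₁‖x_{k−1} − x_k‖/‖B x_{k−1} − B x_k‖ if ‖B x_{k−1} − B x_k‖ > (c₂/λ_{k−1})‖x_{k−1} − x_k‖, and λ_k = (1 + γ_{k−1}) λ_{k−1} otherwise. Then there exists a natural number k₁ such that for all k ≥ k₁, λ_{k−1}⟨B x_k − B x_{k−1}, x_k − x_{k+1}⟩ ≤ (c₂/2)‖x_k − x_{k−1}‖² + (c₂/2)‖x_{k+1}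 − x_k‖². -/
open Filter RealInnerProductSpace

set_option maxHeartbeats 1000000 in
/-- The key step-size estimate: eventually
`λ_{k-1}⟨B x_k − B x_{k-1}, x_k − x_{k+1}⟩ ≤ (c₂/2)‖x_k − x_{k-1}‖² + (c₂/2)‖x_{k+1} − x_k‖²`. -/
theorem adaptive_stepsize_inner_product_estimate
    {H : Type*} [NormedAddCommGroup H] [InnerProductSpace ℝ H]
    (B : H → H) (L : ℝ) (hL : 0 < L)
    (hLip : ∀ x y : H, ‖B x - B y‖ ≤ L * ‖x - y‖)
    (x : ℕ → H) (c₁ c₂ : ℝ) (hc₁ : 0 < c₁) (hc₁₂ : c₁ < c₂)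
    (γ : ℕ → ℝ) (hγ : ∀ k, 0 ≤ γ k) (hγsum : Summable γ)
    (lam : ℕ → ℝ) (hlam0 : 0 < lam 0)
    (hrule : ∀ k : ℕ,
      lam (k + 1) =
        if (c₂ / lam k) * ‖x k - x (k + 1)‖ < ‖B (x k) - B (x (k + 1))‖ then
          c₁ * ‖x k - x (k + 1)‖ / ‖B (x k) - B (x (k + 1))‖
        else (1 + γ k) * lam k) :
    ∃ k₁ : ℕ, 1 ≤ k₁ ∧ ∀ k : ℕ, k₁ ≤ k →
      lam (k - 1) * ⟪B (x k) - B (x (k - 1)), x k - x (k + 1)⟫ ≤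
        c₂ / 2 * ‖x k - x (k - 1)‖ ^ 2 + c₂ / 2 * ‖x (k + 1) - x k‖ ^ 2 := by
  classical
  have hc₂ : 0 < c₂ := hc₁.trans hc₁₂
  set q : ℝ := c₁ / c₂ with hqdef
  have hq0 : 0 < q := div_pos hc₁ hc₂
  have hq1 : q < 1 := (div_lt_one hc₂).2 hc₁₂
  set cond : ℕ → Prop :=
    fun k => (c₂ / lam k) * ‖x k - x (k + 1)‖ < ‖B (x k) - B (x (k + 1))‖ with hconddef
  -- if cond k then the displacement is nonzero
  have hΔx : ∀ k, cond k → 0 < ‖x k - x (k + 1)‖ := by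
    intro k hk
    rcases (norm_nonneg (x k - x (k + 1))).lt_or_eq with h' | h'
    · exact h'
    · exfalso
      have h2 := hLip (x k) (x (k + 1))
      have hk' : (c₂ / lam k) * ‖x k - x (k + 1)‖ < ‖B (x k) - B (x (k + 1))‖ := hk
      rw [← h', mul_zero] at hk'
      rw [← h', mul_zero] at h2
      linarith
  -- positivity of lam
  have hpos : ∀ k, 0 < lam k := by
    intro k
    induction k with
    | zero => exact hlam0
    | succ n ih =>
      rw [hrule n]
      split_ifs with h
      · have hx : 0 < ‖x n - x (n + 1)‖ := hΔx n h
        have hB : 0 < ‖B (x n) - B (x (n + 1))‖ := by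
          refine lt_of_le_of_lt ?_ h
          positivity
        positivity
      · have h1 : 0 < 1 + γ n := by linarith [hγ n]
        positivity
  have hΔB : ∀ k, cond k → 0 < ‖B (x k) - B (x (k + 1))‖ := by
    intro k hk
    refine lt_of_le_of_lt ?_ hk
    have := hpos k
    positivity
  -- lower bound
  set m : ℝ := min (lam 0) (c₁ / L) with hmdef
  have hm0 : 0 < m := lt_min hlam0 (div_pos hc₁ hL)
  have hlow : ∀ k, m ≤ lam k := by
    intro k
    induction k with
    | zero => exact min_le_left _ _
    | succ n ih =>
      rw [hrule n]
      split_ifs with h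
      · have hx : 0 < ‖x n - x (n + 1)‖ := hΔx n h
        have hB : 0 < ‖B (x n) - B (x (n + 1))‖ := hΔB n h
        have hLipn := hLip (x n) (x (n + 1))
        have : c₁ / L ≤ c₁ * ‖x n - x (n + 1)‖ / ‖B (x n) - B (x (n + 1))‖ := by
          rw [div_le_div_iff₀ hL hB]
          nlinarith
        exact le_trans (min_le_right _ _) this
      · nlinarith [hγ n, hpos n]
  -- geometric decrease in the true branch
  have hdec : ∀ k, cond k → lam (k + 1) ≤ q * lam k := by
    intro k hk
    have hx : 0 < ‖x k - x (k + 1)‖ := hΔx k hk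
    have hB : 0 < ‖B (x k) - B (x (k + 1))‖ := hΔB k hk
    have hlk := hpos k
    have hk' : c₂ * ‖x k - x (k + 1)‖ < lam k * ‖B (x k) - B (x (k + 1))‖ := by
      have := hk
      rw [hconddef] at this
      rw [div_mul_eq_mul_div, div_lt_iff₀ hlk] at this
      nlinarith
    rw [hrule k, if_pos hk, div_le_iff₀ hB]
    have hqc : q * c₂ = c₁ := div_mul_cancel₀ _ hc₂.ne'
    nlinarith [mul_lt_mul_of_pos_left hk' hq0]
  -- counting function
  set N : ℕ → ℕ := fun n => ((Finset.range n).filter cond).card with hNdef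
  have hNmono : Monotone N := by
    intro a b hab
    exact Finset.card_le_card (Finset.filter_subset_filter _ (Finset.range_subset_range.2 hab))
  have hNstep : ∀ k, cond k → N (k + 1) = N k + 1 := by
    intro k hk
    simp only [hNdef, Finset.range_add_one, Finset.filter_insert, if_pos hk]
    rw [Finset.card_insert_of_notMem (by simp)]
  have hNstep' : ∀ k, ¬ cond k → N (k + 1) = N k := by
    intro k hk
    simp only [hNdef, Finset.range_add_one, Finset.filter_insert, if_neg hk]
  -- product bound
  set S : ℝ := ∑' k, γ k with hSdef
  have hSnonneg : 0 ≤ S := tsum_nonneg hγ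
  have hbound : ∀ n, lam n ≤ lam 0 * (∏ k ∈ Finset.range n, (1 + γ k)) * q ^ N n := by
    intro n
    induction n with
    | zero => simp [hNdef]
    | succ n ih =>
      have hP : (0:ℝ) < ∏ k ∈ Finset.range n, (1 + γ k) :=
        Finset.prod_pos (fun k _ => by linarith [hγ k])
      have hqN : (0:ℝ) < q ^ N n := pow_pos hq0 _
      have hPs : (∏ k ∈ Finset.range (n + 1), (1 + γ k))
          = (∏ k ∈ Finset.range n, (1 + γ k)) * (1 + γ n) := Finset.prod_range_succ _ _
      by_cases h : cond n
      · have h1 := hdec n h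
        rw [hNstep n h, hPs]
        have hg := hγ n
        calc lam (n + 1) ≤ q * lam n := h1
          _ ≤ q * (lam 0 * (∏ k ∈ Finset.range n, (1 + γ k)) * q ^ N n) := by
              nlinarith
          _ ≤ lam 0 * ((∏ k ∈ Finset.range n, (1 + γ k)) * (1 + γ n)) * q ^ (N n + 1) := by
              rw [pow_succ]
              have key : 0 ≤ γ n * (lam 0 * ((∏ k ∈ Finset.range n, (1 + γ k)) * (q ^ N n * q))) := by
                positivity
              nlinarith [key]
      · rw [hNstep' n h, hPs, hrule n, if_neg h]
        have hg := hγ n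
        have key := mul_le_mul_of_nonneg_left ih (by linarith : (0:ℝ) ≤ 1 + γ n)
        nlinarith [key]
  have hexp : ∀ n, (∏ k ∈ Finset.range n, (1 + γ k)) ≤ Real.exp S := by
    intro n
    calc (∏ k ∈ Finset.range n, (1 + γ k))
        ≤ ∏ k ∈ Finset.range n, Real.exp (γ k) := by
          refine Finset.prod_le_prod (fun k _ => by linarith [hγ k]) ?_
          intro k _
          linarith [Real.add_one_le_exp (γ k)]
      _ = Real.exp (∑ k ∈ Finset.range n, γ k) := (Real.exp_sum _ _).symm
      _ ≤ Real.exp S := by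
          refine Real.exp_le_exp.2 ?_
          exact Summable.sum_le_tsum _ (fun i _ => hγ i) hγsum
  have hCbound : ∀ n, m ≤ lam 0 * Real.exp S * q ^ N n := by
    intro n
    refine le_trans (hlow n) (le_trans (hbound n) ?_)
    have hqN : (0:ℝ) < q ^ N n := pow_pos hq0 _
    have key := mul_le_mul_of_nonneg_right
      (mul_le_mul_of_nonneg_left (hexp n) (hpos 0).le) hqN.le
    linarith
  -- N is bounded
  obtain ⟨M, hM⟩ : ∃ M : ℕ, lam 0 * Real.exp S * q ^ M < m := by
    have hC : 0 < lam 0 * Real.exp S := by positivity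
    obtain ⟨M, hM⟩ := exists_pow_lt_of_lt_one (div_pos hm0 hC) hq1
    exact ⟨M, by rw [lt_div_iff₀ hC] at hM; nlinarith⟩
  have hNle : ∀ n, N n ≤ M := by
    intro n
    by_contra hcon
    push_neg at hcon
    have h1 : q ^ N n ≤ q ^ M := pow_le_pow_of_le_one hq0.le hq1.le hcon.le
    have h2 := hCbound n
    have hC : (0:ℝ) ≤ lam 0 * Real.exp S := by positivity
    nlinarith [mul_le_mul_of_nonneg_left h1 hC]
  -- N stabilizes: take n₀ achieving the sup of range N
  have hbdd : BddAbove (Set.range N) := ⟨M, by rintro _ ⟨n, rfl⟩; exact hNle n⟩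
  have hmem : sSup (Set.range N) ∈ Set.range N :=
    Nat.sSup_mem ⟨N 0, ⟨0, rfl⟩⟩ hbdd
  obtain ⟨n₀, hn₀⟩ := hmem
  have hmax : ∀ n, N n ≤ N n₀ := by
    intro n
    rw [hn₀]
    exact le_csSup hbdd ⟨n, rfl⟩
  have hfinal : ∀ k, n₀ ≤ k → ¬ cond k := by
    intro k hk hck
    have h1 : N n₀ ≤ N k := hNmono hk
    have h2 := hNstep k hck
    have h3 := hmax (k + 1)
    omega
  refine ⟨n₀ + 1, le_add_self, ?_⟩
  intro k hk
  obtain ⟨j, rfl⟩ : ∃ j, k = j + 1 := ⟨k - 1, (Nat.succ_pred_eq_of_pos (by omega)).symm⟩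
  simp only [Nat.add_sub_cancel]
  have hj : n₀ ≤ j := by omega
  have hnc : ¬ ((c₂ / lam j) * ‖x j - x (j + 1)‖ < ‖B (x j) - B (x (j + 1))‖) :=
    hfinal j hj
  push_neg at hnc
  have hlj := hpos j
  have hnc' : lam j * ‖B (x j) - B (x (j + 1))‖ ≤ c₂ * ‖x j - x (j + 1)‖ := by
    rw [div_mul_eq_mul_div, le_div_iff₀ hlj] at hnc
    nlinarith
  have hip := real_inner_le_norm (B (x (j + 1)) - B (x j)) (x (j + 1) - x (j + 1 + 1))
  have e1 : ‖B (x (j + 1)) - B (x j)‖ = ‖B (x j) - B (x (j + 1))‖ := norm_sub_rev _ _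
  have e2 : ‖x (j + 1) - x j‖ = ‖x j - x (j + 1)‖ := norm_sub_rev _ _
  have e3 : ‖x (j + 1 + 1) - x (j + 1)‖ = ‖x (j + 1) - x (j + 1 + 1)‖ := norm_sub_rev _ _
  rw [e2, e3]
  rw [e1] at hip
  nlinarith [mul_le_mul_of_nonneg_left hip hlj.le,
    mul_le_mul_of_nonneg_right hnc' (norm_nonneg (x (j + 1) - x (j + 1 + 1))),
    sq_nonneg (‖x j - x (j + 1)‖ - ‖x (j + 1) - x (j + 1 + 1)‖),
    norm_nonneg (x j - x (j + 1)), norm_nonneg (x (j + 1) - x (j + 1 + 1)),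
    norm_nonneg (B (x j) - B (x (j + 1))), hc₂.le]
end

section
/- Let H be a real Hilbert space, A : H → Set H a monotone set-valued operator, and B : H → H a monotone L-Lipschitz map with L > 0. Let δ ∈ ℝ and ε > 0, and fix constants 0 < c₁ < c₂ < (1 − ε)/(2|δ| + 2), an initial value λ₀ > 0, and a summable sequence (γ_k)_{k≥0} of nonnegative reals. Let (x_k)_{k≥0} be a sequence in H, define λ_k for k ≥ 1 by the adaptive rule, and suppose the GFRB inclusion x_k − x_{k+1} − λ_k B x_k − λ_{k−1}(1 + δ)(B x_k − B x_{k−1}) + δ λ_{k−2}(B x_{k−1} − B x_{k−2}) ∈ λ_k A(x_{k+1}) holds for all k ≥ 2. Suppose x ∈ H satisfies −B x ∈ A x. Then there exists a natural number k₃ such that for all k ≥ k₃: ‖x_{k+1} − x‖² + 2λ_k⟨B x_{k+1} − B x_k, x − x_{k+1}⟩ + (ε + |δ|c₂ + c₂)‖x_{k+1} − x_k‖² + |δ|c₂‖x_k − x_{k−1}‖² + 2δλ_{k−1}⟨B x_k − B x_{k−1}, x_{k+1} − x⟩ ≤ ‖x_k − x‖² + 2λ_{k−1}⟨B x_k − B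 x_{k−1}, x − x_k⟩ + (ε + |δ|c₂ + c₂)‖x_k − x_{k−1}‖² + |δ|c₂‖x_{k−1} − x_{k−2}‖² + 2δλ_{k−2}⟨B x_{k−1} − B x_{k−2}, x_k − x⟩ − ε‖x_k − x_{k−1}‖². -/
open Filter RealInnerProductSpace Pointwise

set_option maxHeartbeats 2000000 in
/-- Lemma (descent inequality) for GFRB with the adaptive increasing step-size. -/
theorem gfrb_descent_inequality
    {H : Type*} [NormedAddCommGroup H] [InnerProductSpace ℝ H]
    (A : H → Set H)
    (hAmono : ∀ x y u v : H, u ∈ A x → v ∈ A y → 0 ≤ ⟪u - v, x - y⟫)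
    (B : H → H) (L : ℝ) (hL : 0 < L)
    (hBmono : ∀ x y : H, 0 ≤ ⟪B x - B y, x - y⟫)
    (hLip : ∀ x y : H, ‖B x - B y‖ ≤ L * ‖x - y‖)
    (δ ε : ℝ) (hε : 0 < ε)
    (c₁ c₂ : ℝ) (hc₁ : 0 < c₁) (hc₁₂ : c₁ < c₂)
    (hc₂ : c₂ < (1 - ε) / (2 * |δ| + 2))
    (γ : ℕ → ℝ) (hγ : ∀ k, 0 ≤ γ k) (hγsum : Summable γ)
    (x : ℕ → H)
    (lam : ℕ → ℝ) (hlam0 : 0 < lam 0)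
    (hrule : ∀ k : ℕ,
      lam (k + 1) =
        if (c₂ / lam k) * ‖x k - x (k + 1)‖ < ‖B (x k) - B (x (k + 1))‖ then
          c₁ * ‖x k - x (k + 1)‖ / ‖B (x k) - B (x (k + 1))‖
        else (1 + γ k) * lam k)
    (hGFRB : ∀ k : ℕ, 2 ≤ k →
      x k - x (k + 1) - lam k • B (x k)
          - (lam (k - 1) * (1 + δ)) • (B (x k) - B (x (k - 1)))
          + (δ * lam (k - 2)) • (B (x (k - 1)) - B (x (k - 2)))
        ∈ lam k • A (x (k + 1)))
    (x' : H) (hx' : -B x' ∈ A x') :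
    ∃ k₃ : ℕ, ∀ k : ℕ, k₃ ≤ k →
      ‖x (k + 1) - x'‖ ^ 2
          + 2 * lam k * ⟪B (x (k + 1)) - B (x k), x' - x (k + 1)⟫
          + (ε + |δ| * c₂ + c₂) * ‖x (k + 1) - x k‖ ^ 2
          + |δ| * c₂ * ‖x k - x (k - 1)‖ ^ 2
          + 2 * δ * lam (k - 1) * ⟪B (x k) - B (x (k - 1)), x (k + 1) - x'⟫ ≤
        ‖x k - x'‖ ^ 2
          + 2 * lam (k - 1) * ⟪B (x k) - B (x (k - 1)), x' - x k⟫
          + (ε + |δ| * c₂ + c₂) * ‖x k - x (k - 1)‖ ^ 2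
          + |δ| * c₂ * ‖x (k - 1) - x (k - 2)‖ ^ 2
          + 2 * δ * lam (k - 2) * ⟪B (x (k - 1)) - B (x (k - 2)), x k - x'⟫
          - ε * ‖x k - x (k - 1)‖ ^ 2 := by
  have hc₂pos : 0 < c₂ := hc₁.trans hc₁₂
  set m : ℝ := min (lam 0) (c₁ / L) with hm
  have hmpos : 0 < m := lt_min hlam0 (by positivity)
  -- lower bound
  have hlb : ∀ k, m ≤ lam k := by
    intro k
    induction k with
    | zero => exact min_le_left _ _
    | succ k ih =>
      rw [hrule k]
      split_ifs with h
      · have hlamk : 0 < lam k := lt_of_lt_of_le hmpos ih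
        have hbd : 0 < ‖B (x k) - B (x (k+1))‖ :=
          lt_of_le_of_lt (mul_nonneg (div_nonneg hc₂pos.le hlamk.le) (norm_nonneg _)) h
        have hxd : 0 < ‖x k - x (k+1)‖ := by
          rcases eq_or_lt_of_le (norm_nonneg (x k - x (k+1))) with he | h'
          · exfalso
            have := hLip (x k) (x (k+1))
            rw [← he] at this
            nlinarith
          · exact h'
        have hb2 : ‖B (x k) - B (x (k+1))‖ ≤ L * ‖x k - x (k+1)‖ := hLip _ _
        have : c₁ / L ≤ c₁ * ‖x k - x (k+1)‖ / ‖B (x k) - B (x (k+1))‖ := by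
          rw [div_le_div_iff₀ hL hbd]
          nlinarith
        exact le_trans (min_le_right _ _) this
      · have hlamk : 0 ≤ lam k := le_trans hmpos.le ih
        nlinarith [hγ k, ih]
  have hpos : ∀ k, 0 < lam k := fun k => lt_of_lt_of_le hmpos (hlb k)
  -- upper step
  have hup : ∀ k, lam (k + 1) ≤ (1 + γ k) * lam k := by
    intro k
    rw [hrule k]
    split_ifs with h
    · have hlamk := hpos k
      have hbd : 0 < ‖B (x k) - B (x (k+1))‖ :=
        lt_of_le_of_lt (mul_nonneg (div_nonneg hc₂pos.le hlamk.le) (norm_nonneg _)) h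
      have h2 : c₂ * ‖x k - x (k+1)‖ < lam k * ‖B (x k) - B (x (k+1))‖ := by
        rw [div_mul_eq_mul_div, div_lt_iff₀ hlamk] at h
        nlinarith
      rw [div_le_iff₀ hbd]
      nlinarith [norm_nonneg (x k - x (k+1)), hγ k,
        mul_nonneg (mul_nonneg (hγ k) hlamk.le) hbd.le,
        mul_nonneg (sub_nonneg.mpr hc₁₂.le) (norm_nonneg (x k - x (k+1)))]
    · exact le_refl _
  -- step-size bound
  have hsb : ∀ k, lam (k+1) * ‖B (x k) - B (x (k+1))‖ ≤ (1 + γ k) * c₂ * ‖x k - x (k+1)‖ := by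
    intro k
    rw [hrule k]
    split_ifs with h
    · have hbd : 0 < ‖B (x k) - B (x (k+1))‖ :=
        lt_of_le_of_lt (mul_nonneg (div_nonneg hc₂pos.le (hpos k).le) (norm_nonneg _)) h
      rw [div_mul_cancel₀ _ (ne_of_gt hbd)]
      nlinarith [norm_nonneg (x k - x (k+1)), hγ k,
        mul_nonneg (mul_nonneg (hγ k) hc₂pos.le) (norm_nonneg (x k - x (k+1))),
        mul_nonneg (sub_nonneg.mpr hc₁₂.le) (norm_nonneg (x k - x (k+1)))]
    · push_neg at h
      have hlamk := hpos k
      have h2 : ‖B (x k) - B (x (k+1))‖ * lam k ≤ c₂ * ‖x k - x (k+1)‖ := by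
        rw [div_mul_eq_mul_div] at h
        exact (le_div_iff₀ hlamk).mp h
      nlinarith [hγ k, mul_nonneg (hγ k) (sub_nonneg.mpr h2)]
  -- infinite product
  set P : ℕ → ℝ := fun k => ∏ j ∈ Finset.range k, (1 + γ j) with hPdef
  have hP1 : ∀ k, 1 ≤ P k := fun k => by
    show (1:ℝ) ≤ ∏ j ∈ Finset.range k, (1 + γ j)
    calc (1:ℝ) = ∏ _j ∈ Finset.range k, (1:ℝ) := by simp
      _ ≤ ∏ j ∈ Finset.range k, (1 + γ j) :=
        Finset.prod_le_prod (by norm_num) (fun j _ => by linarith [hγ j])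
  have hPpos : ∀ k, 0 < P k := fun k => lt_of_lt_of_le one_pos (hP1 k)
  have hPsucc : ∀ k, P (k+1) = P k * (1 + γ k) := fun k => by
    show ∏ j ∈ Finset.range (k+1), (1 + γ j) = (∏ j ∈ Finset.range k, (1 + γ j)) * (1 + γ k)
    exact Finset.prod_range_succ _ k
  have hPmono : Monotone P := monotone_nat_of_le_succ (fun k => by
    rw [hPsucc k]; nlinarith [hP1 k, hγ k])
  have hPbdd : BddAbove (Set.range P) := ⟨Real.exp (∑' i, γ i), by
    rintro _ ⟨k, rfl⟩
    show ∏ j ∈ Finset.range k, (1 + γ j) ≤ Real.exp (∑' i, γ i)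
    calc (∏ j ∈ Finset.range k, (1 + γ j)) ≤ ∏ j ∈ Finset.range k, Real.exp (γ j) :=
        Finset.prod_le_prod (fun j _ => by linarith [hγ j])
          (fun j _ => by linarith [Real.add_one_le_exp (γ j)])
      _ = Real.exp (∑ j ∈ Finset.range k, γ j) := (Real.exp_sum _ _).symm
      _ ≤ _ := Real.exp_le_exp.mpr (Summable.sum_le_tsum _ (fun i _ => hγ i) hγsum)⟩
  have hPtend : Tendsto P atTop (nhds (⨆ k, P k)) := tendsto_atTop_ciSup hPmono hPbdd
  have hPsup1 : 1 ≤ ⨆ k, P k := le_trans (by simp [hPdef]) (le_ciSup hPbdd 0)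
  have hPsupPos : 0 < ⨆ k, P k := lt_of_lt_of_le one_pos hPsup1
  have hPle : ∀ k, P k ≤ ⨆ k, P k := fun k => le_ciSup hPbdd k
  -- mu
  set μ : ℕ → ℝ := fun k => lam k / P k with hμdef
  have hμanti : Antitone μ := antitone_nat_of_succ_le (fun k => by
    show lam (k+1) / P (k+1) ≤ lam k / P k
    rw [div_le_div_iff₀ (hPpos (k+1)) (hPpos k), hPsucc k]
    nlinarith [hup k, hPpos k, hγ k, hpos (k+1)])
  have hμlb : ∀ k, m / (⨆ k, P k) ≤ μ k := by
    intro k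
    show m / (⨆ k, P k) ≤ lam k / P k
    rw [div_le_div_iff₀ hPsupPos (hPpos k)]
    nlinarith [hlb k, hPle k, hPpos k, hmpos]
  have hμbdd : BddBelow (Set.range μ) := ⟨m / (⨆ k, P k), by rintro _ ⟨k, rfl⟩; exact hμlb k⟩
  have hμtend : Tendsto μ atTop (nhds (⨅ k, μ k)) := tendsto_atTop_ciInf hμanti hμbdd
  have hμinfpos : 0 < ⨅ k, μ k :=
    lt_of_lt_of_le (div_pos hmpos hPsupPos) (le_ciInf hμlb)
  set Λ : ℝ := (⨅ k, μ k) * (⨆ k, P k) with hΛdef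
  have hΛpos : 0 < Λ := mul_pos hμinfpos hPsupPos
  have hlamtend : Tendsto lam atTop (nhds Λ) := by
    refine Tendsto.congr (fun k => ?_) (hμtend.mul hPtend)
    show μ k * P k = lam k
    exact div_mul_cancel₀ _ (hPpos k).ne'
  have hratio : Tendsto (fun j => lam j / lam (j+1) * (1 + γ j)) atTop (nhds 1) := by
    have h1 : Tendsto (fun j => lam (j+1)) atTop (nhds Λ) :=
      hlamtend.comp (tendsto_add_atTop_nat 1)
    have h2 : Tendsto (fun j => lam j / lam (j+1) * (1 + γ j)) atTop (nhds (Λ / Λ * (1 + 0))) :=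
      (hlamtend.div h1 hΛpos.ne').mul
        ((tendsto_const_nhds : Tendsto (fun _ : ℕ => (1:ℝ)) atTop (nhds 1)).add
          hγsum.tendsto_atTop_zero)
    have : Λ / Λ * (1 + 0) = 1 := by rw [div_self hΛpos.ne']; norm_num
    rwa [this] at h2
  -- eventual step bound with slack η
  have hstepK : ∀ η : ℝ, 0 < η → ∃ K : ℕ, ∀ j : ℕ, K ≤ j →
      lam j * ‖B (x j) - B (x (j+1))‖ ≤ (1 + η) * c₂ * ‖x j - x (j+1)‖ := by
    intro η hη
    obtain ⟨K, hK⟩ := eventually_atTop.mp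
      (hratio.eventually_lt_const (by linarith : (1:ℝ) < 1 + η))
    refine ⟨K, fun j hj => ?_⟩
    have h1 := hsb j
    have hr := (hK j hj).le
    have hl1 := hpos (j+1)
    have e : lam j * ‖B (x j) - B (x (j+1))‖
        = lam j / lam (j+1) * (lam (j+1) * ‖B (x j) - B (x (j+1))‖) := by
      field_simp
    have hdnn : 0 ≤ lam j / lam (j+1) := div_nonneg (hpos j).le hl1.le
    calc lam j * ‖B (x j) - B (x (j+1))‖
        = lam j / lam (j+1) * (lam (j+1) * ‖B (x j) - B (x (j+1))‖) := e
      _ ≤ lam j / lam (j+1) * ((1 + γ j) * c₂ * ‖x j - x (j+1)‖) :=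
          mul_le_mul_of_nonneg_left h1 hdnn
      _ = (lam j / lam (j+1) * (1 + γ j)) * (c₂ * ‖x j - x (j+1)‖) := by ring
      _ ≤ (1 + η) * (c₂ * ‖x j - x (j+1)‖) :=
          mul_le_mul_of_nonneg_right hr (by positivity)
      _ = (1 + η) * c₂ * ‖x j - x (j+1)‖ := by ring
  -- constants
  have habs : (0:ℝ) ≤ |δ| := abs_nonneg δ
  have hslack : ε + 2*(1+|δ|)*c₂ < 1 := by
    rw [lt_div_iff₀ (by positivity : (0:ℝ) < 2*|δ|+2)] at hc₂
    nlinarith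
  obtain ⟨η, hηpos, hη1, h3⟩ : ∃ η : ℝ, 0 < η ∧ η ≤ 1 ∧
      η * (3*(1+|δ|)*c₂) ≤ 1 - ε - 2*(1+|δ|)*c₂ := by
    refine ⟨min 1 ((1 - ε - 2*(1+|δ|)*c₂) / (3*(1+|δ|)*c₂)),
      lt_min one_pos (div_pos (by linarith) (by positivity)), min_le_left _ _, ?_⟩
    rw [← le_div_iff₀ (by positivity : (0:ℝ) < 3*(1+|δ|)*c₂)]
    exact min_le_right _ _
  have hkey : ε + |δ| * c₂ + c₂ - 1 + (1+|δ|)*c₂*(1+η)^2 ≤ 0 := by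
    have hη2 : η^2 ≤ η := by nlinarith
    have hmul : 0 ≤ (η - η^2) * ((1+|δ|)*c₂) :=
      mul_nonneg (by linarith) (by positivity)
    nlinarith [h3, hmul]
  obtain ⟨K, hK⟩ := hstepK η hηpos
  clear_value m P μ Λ
  clear hstepK hratio hlamtend hΛpos hΛdef
  clear Λ
  clear hμtend hμinfpos hμbdd hμlb hμanti hμdef hPtend hPle hPsupPos hPsup1 hPbdd
    hPmono hPsucc hPpos hP1 hPdef
  clear μ P
  clear hup hsb hlb hslack h3 hη1 hrule hLip hL hγ hγsum hlam0 hmpos hm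
  clear m
  refine ⟨K + 2, fun k hk => ?_⟩
  obtain ⟨j, rfl⟩ : ∃ j, k = j + 2 := ⟨k - 2, by omega⟩
  simp only [show j+2-1 = j+1 by omega, show j+2-2 = j by omega,
    show j+2+1 = j+3 by omega]
  have hlamk2 := hpos (j+2)
  have hlamp2 := hpos (j+1)
  have hlamq2 := hpos j
  -- step bounds
  have hs1 := hK (j+1) (by omega)
  simp only [show j+1+1 = j+2 by omega] at hs1
  have hs0 := hK j (by omega)
  have hs1' : lam (j+1) * ‖B (x (j+2)) - B (x (j+1))‖
      ≤ (1+η) * c₂ * ‖x (j+2) - x (j+1)‖ := by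
    rw [norm_sub_rev (B (x (j+2))), norm_sub_rev (x (j+2))]
    exact hs1
  have hs0' : lam j * ‖B (x (j+1)) - B (x j)‖
      ≤ (1+η) * c₂ * ‖x (j+1) - x j‖ := by
    rw [norm_sub_rev (B (x (j+1))), norm_sub_rev (x (j+1))]
    exact hs0
  -- inclusion
  have hg := hGFRB (j+2) (by omega)
  simp only [show j+2-1 = j+1 by omega, show j+2-2 = j by omega,
    show j+2+1 = j+3 by omega] at hg
  rw [Set.mem_smul_set] at hg
  obtain ⟨v, hv, hveq⟩ := hg
  have hm0 := hAmono (x (j+3)) x' v (-B x') hv hx'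
  rw [sub_neg_eq_add] at hm0
  have h0 : 0 ≤ ⟪(x (j+2) - x (j+3) - lam (j+2) • B (x (j+2))
      - (lam (j+1) * (1+δ)) • (B (x (j+2)) - B (x (j+1)))
      + (δ * lam j) • (B (x (j+1)) - B (x j))) + lam (j+2) • B x', x (j+3) - x'⟫ := by
    rw [← hveq, ← smul_add, real_inner_smul_left]
    exact mul_nonneg hlamk2.le hm0
  have hexp : ⟪(x (j+2) - x (j+3) - lam (j+2) • B (x (j+2))
      - (lam (j+1) * (1+δ)) • (B (x (j+2)) - B (x (j+1)))
      + (δ * lam j) • (B (x (j+1)) - B (x j))) + lam (j+2) • B x', x (j+3) - x'⟫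
      = ⟪x (j+2) - x (j+3), x (j+3) - x'⟫
        - lam (j+2) * ⟪B (x (j+3)) - B (x (j+2)), x' - x (j+3)⟫
        - lam (j+2) * ⟪B (x (j+3)) - B x', x (j+3) - x'⟫
        - (lam (j+1) * (1+δ)) * ⟪B (x (j+2)) - B (x (j+1)), x (j+3) - x'⟫
        + (δ * lam j) * ⟪B (x (j+1)) - B (x j), x (j+3) - x'⟫ := by
    simp only [inner_add_left, inner_sub_left, inner_sub_right, real_inner_smul_left]
    ring
  rw [hexp] at h0
  have hA3 : 0 ≤ lam (j+2) * ⟪B (x (j+3)) - B x', x (j+3) - x'⟫ :=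
    mul_nonneg hlamk2.le (hBmono _ _)
  have hA1 : 2 * ⟪x (j+2) - x (j+3), x (j+3) - x'⟫
      = ‖x (j+2) - x'‖^2 - ‖x (j+3) - x'‖^2 - ‖x (j+3) - x (j+2)‖^2 := by
    have h₁ : x (j+2) - x (j+3) = (x (j+2) - x') - (x (j+3) - x') := by abel
    have h₂ : ‖x (j+3) - x (j+2)‖ = ‖(x (j+2) - x') - (x (j+3) - x')‖ := by
      rw [← h₁, norm_sub_rev]
    have e := norm_sub_sq_real (x (j+2) - x') (x (j+3) - x')
    have e2 : ⟪x (j+2) - x (j+3), x (j+3) - x'⟫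
        = ⟪x (j+2) - x', x (j+3) - x'⟫ - ⟪x (j+3) - x', x (j+3) - x'⟫ := by
      rw [← inner_sub_left, ← h₁]
    have e3 : ‖x (j+3) - x (j+2)‖^2 = ‖(x (j+2) - x') - (x (j+3) - x')‖^2 := by
      rw [h₂]
    rw [e2, real_inner_self_eq_norm_sq, e3, e]
    ring
  have hpack1 : lam (j+1) * ⟪B (x (j+2)) - B (x (j+1)), x (j+3) - x'⟫
      + lam (j+1) * ⟪B (x (j+2)) - B (x (j+1)), x' - x (j+2)⟫
      = lam (j+1) * ⟪B (x (j+2)) - B (x (j+1)), x (j+3) - x (j+2)⟫ := by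
    rw [← mul_add, ← inner_add_right]
    have : (x (j+3) - x') + (x' - x (j+2)) = x (j+3) - x (j+2) := by abel
    rw [this]
  have hpack2 : (δ * lam j) * ⟪B (x (j+1)) - B (x j), x (j+3) - x'⟫
      - (δ * lam j) * ⟪B (x (j+1)) - B (x j), x (j+2) - x'⟫
      = (δ * lam j) * ⟪B (x (j+1)) - B (x j), x (j+3) - x (j+2)⟫ := by
    rw [← mul_sub, ← inner_sub_right]
    have : (x (j+3) - x') - (x (j+2) - x') = x (j+3) - x (j+2) := by abel
    rw [this]
  -- Cauchy-Schwarz bounds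
  have hb1 : -(lam (j+1) * ⟪B (x (j+2)) - B (x (j+1)), x (j+3) - x (j+2)⟫)
      ≤ (1+η) * c₂ * (‖x (j+2) - x (j+1)‖ * ‖x (j+3) - x (j+2)‖) := by
    have hcs := abs_real_inner_le_norm (B (x (j+2)) - B (x (j+1))) (x (j+3) - x (j+2))
    have e1 : lam (j+1) * -⟪B (x (j+2)) - B (x (j+1)), x (j+3) - x (j+2)⟫
        ≤ lam (j+1) * |⟪B (x (j+2)) - B (x (j+1)), x (j+3) - x (j+2)⟫| :=
      mul_le_mul_of_nonneg_left (neg_le_abs _) hlamp2.le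
    have e2 : lam (j+1) * |⟪B (x (j+2)) - B (x (j+1)), x (j+3) - x (j+2)⟫|
        ≤ lam (j+1) * (‖B (x (j+2)) - B (x (j+1))‖ * ‖x (j+3) - x (j+2)‖) :=
      mul_le_mul_of_nonneg_left hcs hlamp2.le
    have e3 : lam (j+1) * ‖B (x (j+2)) - B (x (j+1))‖ * ‖x (j+3) - x (j+2)‖
        ≤ ((1+η) * c₂ * ‖x (j+2) - x (j+1)‖) * ‖x (j+3) - x (j+2)‖ :=
      mul_le_mul_of_nonneg_right hs1' (norm_nonneg _)
    linarith only [e1, e2, e3]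
  have hb2 : δ * lam j * ⟪B (x (j+1)) - B (x j), x (j+3) - x (j+2)⟫
      ≤ |δ| * ((1+η) * c₂ * (‖x (j+1) - x j‖ * ‖x (j+3) - x (j+2)‖)) := by
    have hcs := abs_real_inner_le_norm (B (x (j+1)) - B (x j)) (x (j+3) - x (j+2))
    have e0 : δ * lam j * ⟪B (x (j+1)) - B (x j), x (j+3) - x (j+2)⟫
        ≤ |δ| * (lam j * |⟪B (x (j+1)) - B (x j), x (j+3) - x (j+2)⟫|) := by
      have h := le_abs_self (δ * lam j * ⟪B (x (j+1)) - B (x j), x (j+3) - x (j+2)⟫)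
      rw [abs_mul, abs_mul, abs_of_nonneg hlamq2.le] at h
      linarith only [h]
    have f1 : lam j * |⟪B (x (j+1)) - B (x j), x (j+3) - x (j+2)⟫|
        ≤ lam j * (‖B (x (j+1)) - B (x j)‖ * ‖x (j+3) - x (j+2)‖) :=
      mul_le_mul_of_nonneg_left hcs hlamq2.le
    have f2 : lam j * ‖B (x (j+1)) - B (x j)‖ * ‖x (j+3) - x (j+2)‖
        ≤ ((1+η) * c₂ * ‖x (j+1) - x j‖) * ‖x (j+3) - x (j+2)‖ :=
      mul_le_mul_of_nonneg_right hs0' (norm_nonneg _)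
    have f4 : |δ| * (lam j * |⟪B (x (j+1)) - B (x j), x (j+3) - x (j+2)⟫|)
        ≤ |δ| * ((1+η) * c₂ * (‖x (j+1) - x j‖ * ‖x (j+3) - x (j+2)‖)) :=
      mul_le_mul_of_nonneg_left (f1.trans (by nlinarith [f2])) habs
    linarith only [e0, f4]
  have hsq1 : (0:ℝ) ≤ c₂ * ((1+η) * ‖x (j+3) - x (j+2)‖ - ‖x (j+2) - x (j+1)‖)^2 := by
    positivity
  have hsq2 : (0:ℝ) ≤ |δ| * c₂ *
      ((1+η) * ‖x (j+3) - x (j+2)‖ - ‖x (j+1) - x j‖)^2 := by positivity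
  have hquad : (ε + |δ| *c₂ + c₂ - 1 + (1+|δ|)*c₂*(1+η)^2) * ‖x (j+3) - x (j+2)‖^2 ≤ 0 :=
    mul_nonpos_of_nonpos_of_nonneg hkey (sq_nonneg _)
  linarith only [h0, hA3, hA1, hpack1, hpack2, hb1, hb2, hsq1, hsq2, hquad]
end

section
/- Let δ ∈ ℝ, set λ = 1/(2|δ| + 2), and let B₂ be the 2×2 real rotation matrix with rows (0, −1) and (1, 0). Let M be the 6×6 real block matrix M = [[I₂ − λ(δ+2)B₂, λ(2δ+1)B₂, −λδB₂], [I₂, 0, 0], [0, I₂, 0]], where I₂ is the 2×2 identity. Then the characteristic polynomial of M equals (X³ − X²)² + λ²((δ+2)X² − (2δ+1)X + δ)² in ℝ[X]. -/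
open Polynomial Matrix

section helpers
variable {α : Type*}
private lemma hs1 : Fin.succ (0:Fin 1) = (1:Fin 2) := by decide
private lemma hc2 : Fin.castSucc (0:Fin 1) = (0:Fin 2) := by decide
private lemma hs3 : Fin.succ (0:Fin 2) = (1:Fin 3) := by decide
private lemma hc4 : Fin.castSucc (0:Fin 2) = (0:Fin 3) := by decide
private lemma hs5 : Fin.succ (1:Fin 2) = (2:Fin 3) := by decide
private lemma hc6 : Fin.castSucc (1:Fin 2) = (1:Fin 3) := by decide
private lemma hs7 : Fin.succ (0:Fin 3) = (1:Fin 4) := by decide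
private lemma hc8 : Fin.castSucc (0:Fin 3) = (0:Fin 4) := by decide
private lemma hs9 : Fin.succ (1:Fin 3) = (2:Fin 4) := by decide
private lemma hc10 : Fin.castSucc (1:Fin 3) = (1:Fin 4) := by decide
private lemma hs11 : Fin.succ (2:Fin 3) = (3:Fin 4) := by decide
private lemma hc12 : Fin.castSucc (2:Fin 3) = (2:Fin 4) := by decide
private lemma hs13 : Fin.succ (0:Fin 4) = (1:Fin 5) := by decide
private lemma hc14 : Fin.castSucc (0:Fin 4) = (0:Fin 5) := by decide
private lemma hs15 : Fin.succ (1:Fin 4) = (2:Fin 5) := by decide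
private lemma hc16 : Fin.castSucc (1:Fin 4) = (1:Fin 5) := by decide
private lemma hs17 : Fin.succ (2:Fin 4) = (3:Fin 5) := by decide
private lemma hc18 : Fin.castSucc (2:Fin 4) = (2:Fin 5) := by decide
private lemma hs19 : Fin.succ (3:Fin 4) = (4:Fin 5) := by decide
private lemma hc20 : Fin.castSucc (3:Fin 4) = (3:Fin 5) := by decide
private lemma hs21 : Fin.succ (0:Fin 5) = (1:Fin 6) := by decide
private lemma hc22 : Fin.castSucc (0:Fin 5) = (0:Fin 6) := by decide
private lemma hs23 : Fin.succ (1:Fin 5) = (2:Fin 6) := by decide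
private lemma hc24 : Fin.castSucc (1:Fin 5) = (1:Fin 6) := by decide
private lemma hs25 : Fin.succ (2:Fin 5) = (3:Fin 6) := by decide
private lemma hc26 : Fin.castSucc (2:Fin 5) = (2:Fin 6) := by decide
private lemma hs27 : Fin.succ (3:Fin 5) = (4:Fin 6) := by decide
private lemma hc28 : Fin.castSucc (3:Fin 5) = (3:Fin 6) := by decide
private lemma hs29 : Fin.succ (4:Fin 5) = (5:Fin 6) := by decide
private lemma hc30 : Fin.castSucc (4:Fin 5) = (4:Fin 6) := by decide
private lemma cw1_1 (a : α) (u : Fin 1 → α) : Matrix.vecCons a u (1:Fin 2) = u (0:Fin 1) := by rw [show ((1:Fin 2)) = Fin.succ (0:Fin 1) by decide, Matrix.cons_val_succ]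
private lemma cw2_1 (a : α) (u : Fin 2 → α) : Matrix.vecCons a u (1:Fin 3) = u (0:Fin 2) := by rw [show ((1:Fin 3)) = Fin.succ (0:Fin 2) by decide, Matrix.cons_val_succ]
private lemma cw2_2 (a : α) (u : Fin 2 → α) : Matrix.vecCons a u (2:Fin 3) = u (1:Fin 2) := by rw [show ((2:Fin 3)) = Fin.succ (1:Fin 2) by decide, Matrix.cons_val_succ]
private lemma cw3_1 (a : α) (u : Fin 3 → α) : Matrix.vecCons a u (1:Fin 4) = u (0:Fin 3) := by rw [show ((1:Fin 4)) = Fin.succ (0:Fin 3) by decide, Matrix.cons_val_succ]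
private lemma cw3_2 (a : α) (u : Fin 3 → α) : Matrix.vecCons a u (2:Fin 4) = u (1:Fin 3) := by rw [show ((2:Fin 4)) = Fin.succ (1:Fin 3) by decide, Matrix.cons_val_succ]
private lemma cw3_3 (a : α) (u : Fin 3 → α) : Matrix.vecCons a u (3:Fin 4) = u (2:Fin 3) := by rw [show ((3:Fin 4)) = Fin.succ (2:Fin 3) by decide, Matrix.cons_val_succ]
private lemma cw4_1 (a : α) (u : Fin 4 → α) : Matrix.vecCons a u (1:Fin 5) = u (0:Fin 4) := by rw [show ((1:Fin 5)) = Fin.succ (0:Fin 4) by decide, Matrix.cons_val_succ]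
private lemma cw4_2 (a : α) (u : Fin 4 → α) : Matrix.vecCons a u (2:Fin 5) = u (1:Fin 4) := by rw [show ((2:Fin 5)) = Fin.succ (1:Fin 4) by decide, Matrix.cons_val_succ]
private lemma cw4_3 (a : α) (u : Fin 4 → α) : Matrix.vecCons a u (3:Fin 5) = u (2:Fin 4) := by rw [show ((3:Fin 5)) = Fin.succ (2:Fin 4) by decide, Matrix.cons_val_succ]
private lemma cw4_4 (a : α) (u : Fin 4 → α) : Matrix.vecCons a u (4:Fin 5) = u (3:Fin 4) := by rw [show ((4:Fin 5)) = Fin.succ (3:Fin 4) by decide, Matrix.cons_val_succ]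
private lemma cw5_1 (a : α) (u : Fin 5 → α) : Matrix.vecCons a u (1:Fin 6) = u (0:Fin 5) := by rw [show ((1:Fin 6)) = Fin.succ (0:Fin 5) by decide, Matrix.cons_val_succ]
private lemma cw5_2 (a : α) (u : Fin 5 → α) : Matrix.vecCons a u (2:Fin 6) = u (1:Fin 5) := by rw [show ((2:Fin 6)) = Fin.succ (1:Fin 5) by decide, Matrix.cons_val_succ]
private lemma cw5_3 (a : α) (u : Fin 5 → α) : Matrix.vecCons a u (3:Fin 6) = u (2:Fin 5) := by rw [show ((3:Fin 6)) = Fin.succ (2:Fin 5) by decide, Matrix.cons_val_succ]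
private lemma cw5_4 (a : α) (u : Fin 5 → α) : Matrix.vecCons a u (4:Fin 6) = u (3:Fin 5) := by rw [show ((4:Fin 6)) = Fin.succ (3:Fin 5) by decide, Matrix.cons_val_succ]
private lemma cw5_5 (a : α) (u : Fin 5 → α) : Matrix.vecCons a u (5:Fin 6) = u (4:Fin 5) := by rw [show ((5:Fin 6)) = Fin.succ (4:Fin 5) by decide, Matrix.cons_val_succ]

set_option maxHeartbeats 4000000 in
set_option maxRecDepth 20000 in
private lemma det6 {R : Type*} [CommRing R] (a b c x : R) :
    Matrix.det !![x-1, -a, 0, b, 0, -c;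
       a, x-1, -b, 0, c, 0;
       -1, 0, x, 0, 0, 0;
       0, -1, 0, x, 0, 0;
       0, 0, -1, 0, x, 0;
       0, 0, 0, -1, 0, x] =
    (x^3 - x^2)^2 + (a*x^2 - b*x + c)^2 := by
  simp [Matrix.det_succ_row_zero, Fin.sum_univ_succ, Fin.succAbove,
    hs1, hc2, hs3, hc4, hs5, hc6, hs7, hc8, hs9, hc10, hs11, hc12, hs13, hc14, hs15, hc16, hs17, hc18, hs19, hc20, hs21, hc22, hs23, hc24, hs25, hc26, hs27, hc28, hs29, hc30, cw1_1, cw2_1, cw2_2, cw3_1, cw3_2, cw3_3, cw4_1, cw4_2, cw4_3, cw4_4, cw5_1, cw5_2, cw5_3, cw5_4, cw5_5]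
  ring

end helpers

/-- The characteristic polynomial of the GFRB fixed-point matrix for
`A = 0`, `B = [[0,-1],[1,0]]` on `ℝ²` with `λ = 1/(2|δ|+2)`. -/
theorem gfrb_fixed_point_matrix_charpoly (δ : ℝ) :
    let l : ℝ := 1 / (2 * |δ| + 2)
    let M : Matrix (Fin 6) (Fin 6) ℝ :=
      !![1, l * (δ + 2), 0, -(l * (2 * δ + 1)), 0, l * δ;
         -(l * (δ + 2)), 1, l * (2 * δ + 1), 0, -(l * δ), 0;
         1, 0, 0, 0, 0, 0;
         0, 1, 0, 0, 0, 0;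
         0, 0, 1, 0, 0, 0;
         0, 0, 0, 1, 0, 0]
    M.charpoly =
      (X ^ 3 - X ^ 2) ^ 2 +
        C (l ^ 2) * (C (δ + 2) * X ^ 2 - C (2 * δ + 1) * X + C δ) ^ 2 := by
  intro l M
  have hcm : M.charmatrix =
      !![X - 1, -(C (l * (δ + 2))), 0, C (l * (2 * δ + 1)), 0, -(C (l * δ));
         C (l * (δ + 2)), X - 1, -(C (l * (2 * δ + 1))), 0, C (l * δ), 0;
         -1, 0, X, 0, 0, 0;
         0, -1, 0, X, 0, 0;
         0, 0, -1, 0, X, 0;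
         0, 0, 0, -1, 0, X] := by
    apply Matrix.ext
    intro i j
    fin_cases i <;> fin_cases j <;>
      simp [M, charmatrix_apply, Polynomial.C_neg, Matrix.vecHead, Matrix.vecTail, cw1_1, cw2_1, cw2_2, cw3_1, cw3_2, cw3_3, cw4_1, cw4_2, cw4_3, cw4_4, cw5_1, cw5_2, cw5_3, cw5_4, cw5_5]
  rw [Matrix.charpoly, hcm, det6]
  have : (C (l * (δ + 2)) : ℝ[X]) = C l * C (δ + 2) := by simp [_root_.map_mul]
  have h2 : (C (l * (2 * δ + 1)) : ℝ[X]) = C l * C (2 * δ + 1) := by simp [_root_.map_mul]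
  have h3 : (C (l * δ) : ℝ[X]) = C l * C δ := by simp [_root_.map_mul]
  have h4 : (C (l ^ 2) : ℝ[X]) = C l * C l := by rw [sq]; exact _root_.map_mul C l l
  rw [this, h2, h3, h4]
  ring
end

section
/- The complex polynomial z³ − z² + (i/2)(2z² − z) factors as z·(z − (1−i)/2)²; consequently, the set of complex roots of the degree-6 polynomial (z³ − z²)² + (1/4)(2z² − z)² is exactly {0, (1+i)/2, (1−i)/2}, and every root has modulus at most 1/√2, with the roots (1±i)/2 having modulus exactly 1/√2. -/
open Complex

lemma abs_half (s : ℝ) : ‖(1 + s * I) / 2‖ = Real.sqrt (1 + s^2) / 2 := by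
  rw [norm_div, Complex.norm_two, Complex.norm_def, Complex.normSq_apply]
  simp
  ring_nf

/-- At `δ = 0`, `λ = 1/2`: the cubic factor factors as `z(z − (1−i)/2)²`,
the roots of the degree-6 characteristic polynomial are exactly
`{0, (1+i)/2, (1−i)/2}`, all of modulus at most `1/√2`, and the nonzero
roots have modulus exactly `1/√2`. -/
theorem frb_delta_zero_roots :
    (∀ z : ℂ, z ^ 3 - z ^ 2 + (I / 2) * (2 * z ^ 2 - z)
        = z * (z - (1 - I) / 2) ^ 2) ∧
    (∀ z : ℂ, (z ^ 3 - z ^ 2) ^ 2 + (1 / 4 : ℂ) * (2 * z ^ 2 - z) ^ 2 = 0 ↔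
        z ∈ ({0, (1 + I) / 2, (1 - I) / 2} : Set ℂ)) ∧
    (∀ z : ℂ, (z ^ 3 - z ^ 2) ^ 2 + (1 / 4 : ℂ) * (2 * z ^ 2 - z) ^ 2 = 0 →
        ‖z‖ ≤ 1 / Real.sqrt 2) ∧
    ‖(1 + I) / 2‖ = 1 / Real.sqrt 2 ∧
    ‖(1 - I) / 2‖ = 1 / Real.sqrt 2 := by
  have hfac : ∀ z : ℂ, (z ^ 3 - z ^ 2) ^ 2 + (1 / 4 : ℂ) * (2 * z ^ 2 - z) ^ 2
      = (z * (z - (1 - I) / 2) ^ 2) * (z * (z - (1 + I) / 2) ^ 2) := by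
    intro z
    linear_combination ((2*z^2-z)^2/4 - z/2*(z^3-z^2) - z^2/16*(I^2+1)) * Complex.I_sq
  have hmem : ∀ z : ℂ, (z ^ 3 - z ^ 2) ^ 2 + (1 / 4 : ℂ) * (2 * z ^ 2 - z) ^ 2 = 0 ↔
      z ∈ ({0, (1 + I) / 2, (1 - I) / 2} : Set ℂ) := by
    intro z
    rw [hfac, mul_eq_zero, mul_eq_zero, mul_eq_zero, pow_eq_zero_iff (by norm_num),
      pow_eq_zero_iff (by norm_num), sub_eq_zero, sub_eq_zero]
    simp only [Set.mem_insert_iff, Set.mem_singleton_iff]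
    tauto
  have habs1 : ‖(1 + I) / 2‖ = 1 / Real.sqrt 2 := by
    have := abs_half 1
    norm_num at this
    rw [norm_div, Complex.norm_two, this]
    rw [eq_div_iff (by positivity), div_mul_eq_mul_div, Real.mul_self_sqrt (by norm_num)]
    norm_num
  have habs2 : ‖(1 - I) / 2‖ = 1 / Real.sqrt 2 := by
    have := abs_half (-1)
    norm_num at this
    rw [show (1 : ℂ) - I = 1 + -I by ring, norm_div, Complex.norm_two, this]
    rw [eq_div_iff (by positivity), div_mul_eq_mul_div, Real.mul_self_sqrt (by norm_num)]
    norm_num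
  refine ⟨fun z => by linear_combination (-(z/4)) * Complex.I_sq, hmem, ?_, habs1, habs2⟩
  intro z hz
  rcases (hmem z).mp hz with h | h | h
  · simp [h]
  · rw [h, habs1]
  · rw [h, habs2]
end

section
/- Let δ > 0 and define the complex numbers a = −√2 + (√2(δ+2)/(2(δ+1)))·i, b = −((2δ+1)/(δ+1))·i, and c = (√2·δ/(δ+1))·i. Then (1 − |c|²)² − |a − b·conj(c)|² = −(3δ⁴ + 6δ³ + 5δ² + 12δ + 6)/(2(δ+1)⁴); in particular (1 − |c|²)² < |a − b·conj(c)|² for every δ > 0. -/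
open Complex

/-- Second Schur–Cohn determinant `D₂ = (1 − |c|²)² − |a − b·conj c|²` of the
rescaled cubic, for `δ > 0`: it is negative. -/
theorem schur_cohn_D2_pos_delta (δ : ℝ) (hδ : 0 < δ) :
    let a : ℂ := -(Real.sqrt 2 : ℝ) +
      (Real.sqrt 2 * (δ + 2) / (2 * (δ + 1)) : ℝ) * Complex.I
    let b : ℂ := -(((2 * δ + 1) / (δ + 1) : ℝ) * Complex.I)
    let c : ℂ := (Real.sqrt 2 * δ / (δ + 1) : ℝ) * Complex.I
    (1 - ‖c‖ ^ 2) ^ 2 - ‖a - b * (starRingEnd ℂ) c‖ ^ 2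
        = -(3 * δ ^ 4 + 6 * δ ^ 3 + 5 * δ ^ 2 + 12 * δ + 6) /
            (2 * (δ + 1) ^ 4) ∧
      (1 - ‖c‖ ^ 2) ^ 2 <
        ‖a - b * (starRingEnd ℂ) c‖ ^ 2 := by
  intro a b c
  have hδ1 : (δ + 1) ≠ 0 := by positivity
  have hs : Real.sqrt 2 ^ 2 = 2 := Real.sq_sqrt (by norm_num)
  have key : (1 - ‖c‖ ^ 2) ^ 2 - ‖a - b * (starRingEnd ℂ) c‖ ^ 2
      = -(3 * δ ^ 4 + 6 * δ ^ 3 + 5 * δ ^ 2 + 12 * δ + 6) / (2 * (δ + 1) ^ 4) := by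
    simp only [a, b, c, Complex.sq_norm, Complex.normSq_apply, Complex.sub_re, Complex.sub_im,
      Complex.add_re, Complex.add_im, Complex.mul_re, Complex.mul_im, Complex.neg_re,
      Complex.neg_im, Complex.ofReal_re, Complex.ofReal_im, Complex.I_re, Complex.I_im,
      Complex.conj_re, Complex.conj_im]
    field_simp
    have h4 : Real.sqrt 2 ^ 4 = 4 := by
      rw [show (4:ℕ) = 2*2 from rfl, pow_mul, hs]; norm_num
    ring_nf
    simp only [hs, h4]
    ring
  refine ⟨key, ?_⟩
  have hpos : (0:ℝ) < (3 * δ ^ 4 + 6 * δ ^ 3 + 5 * δ ^ 2 + 12 * δ + 6) / (2 * (δ + 1) ^ 4) := by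
    positivity
  rw [neg_div] at key
  linarith [key]
end

section
/- Let V be a real vector space and let (x_k)_{k≥0} be a sequence in V with x₁ = (1/5)·x₀, x₂ = (1/25)·x₀, and x_{k+1} = (122/285)·x_k + (122/285)·x_{k−1} − (27/285)·x_{k−2} for all k ≥ 2. Then x_k = (1/5^k)·x₀ for all k ≥ 0. -/
/-- GFRB with `λ = 68/285`, `δ = 27/68` on `A = 0`, `B = I`: linear rate `1/5`. -/
theorem gfrb_rate_one_fifth {V : Type*} [AddCommGroup V] [Module ℝ V]
    (x : ℕ → V)
    (h1 : x 1 = (1 / 5 : ℝ) • x 0)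
    (h2 : x 2 = (1 / 25 : ℝ) • x 0)
    (hrec : ∀ k : ℕ, 2 ≤ k →
      x (k + 1) = (122 / 285 : ℝ) • x k + (122 / 285 : ℝ) • x (k - 1)
        - (27 / 285 : ℝ) • x (k - 2)) :
    ∀ k : ℕ, x k = (1 / 5 ^ k : ℝ) • x 0 := by
  intro k
  induction k using Nat.strong_induction_on with
  | _ k ih =>
    match k with
    | 0 => simp
    | 1 => simpa using h1
    | 2 => rw [h2]; norm_num
    | (n + 3) =>
      have h := hrec (n + 2) (by omega)
      have e0 : n + 2 - 1 = n + 1 := by omega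
      have e1 : n + 2 - 2 = n := by omega
      rw [e0, e1, ih (n + 2) (by omega), ih (n + 1) (by omega), ih n (by omega)] at h
      rw [show n + 2 + 1 = n + 3 from rfl] at h
      rw [h, smul_smul, smul_smul, smul_smul, ← add_smul, ← sub_smul]
      congr 1
      field_simp
      ring
end

section
/- Let r ∈ ℝ with r ≠ 0, r ≠ 1, r² − r − 3 ≠ 0, and r² − r − 1 ≠ 0, and set δ = (r² + r − 3)/(r³ − 2r² − 2r + 3). Then δ + 1 ≠ 0, and for any real vector space V and any sequence (x_k)_{k≥0} in V with x₁ = (1/r)·x₀, x₂ = (1/r²)·x₀, and x_{k+1} = ((2δ+1)/(3(δ+1)))·x_k + ((2δ+1)/(3(δ+1)))·x_{k−1} − (δ/(3(δ+1)))·x_{k−2} for all k ≥ 2, one has x_k = (1/r^k)·x₀ for all k ≥ 0. -/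
/-- For any admissible rate `1/r`, the GFRB iteration with
`λ = 1/(3(δ+1))` and `δ = (r² + r − 3)/(r³ − 2r² − 2r + 3)` achieves it. -/
theorem gfrb_arbitrary_linear_rate (r : ℝ)
    (hr0 : r ≠ 0) (hr1 : r ≠ 1)
    (hr3 : r ^ 2 - r - 3 ≠ 0) (hr2 : r ^ 2 - r - 1 ≠ 0)
    (δ : ℝ) (hδ : δ = (r ^ 2 + r - 3) / (r ^ 3 - 2 * r ^ 2 - 2 * r + 3)) :
    δ + 1 ≠ 0 ∧
      ∀ (V : Type*) [AddCommGroup V] [Module ℝ V] (x : ℕ → V),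
        x 1 = (1 / r) • x 0 →
        x 2 = (1 / r ^ 2) • x 0 →
        (∀ k : ℕ, 2 ≤ k →
          x (k + 1) = ((2 * δ + 1) / (3 * (δ + 1))) • x k
            + ((2 * δ + 1) / (3 * (δ + 1))) • x (k - 1)
            - (δ / (3 * (δ + 1))) • x (k - 2)) →
        ∀ k : ℕ, x k = (1 / r ^ k) • x 0 := by
  have hd : r ^ 3 - 2 * r ^ 2 - 2 * r + 3 ≠ 0 := by
    have h : r ^ 3 - 2 * r ^ 2 - 2 * r + 3 = (r - 1) * (r ^ 2 - r - 3) := by ring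
    rw [h]
    exact mul_ne_zero (sub_ne_zero.mpr hr1) hr3
  have hδ1 : δ + 1 ≠ 0 := by
    rw [hδ, div_add' _ _ _ hd]
    apply div_ne_zero _ hd
    have h : r ^ 2 + r - 3 + 1 * (r ^ 3 - 2 * r ^ 2 - 2 * r + 3) = r * (r ^ 2 - r - 1) := by
      ring
    rw [h]
    exact mul_ne_zero hr0 hr2
  have hpoly : 3 * (δ + 1) = (2 * δ + 1) * r + (2 * δ + 1) * r ^ 2 - δ * r ^ 3 := by
    have e : δ * (r ^ 3 - 2 * r ^ 2 - 2 * r + 3) = r ^ 2 + r - 3 := by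
      rw [hδ]; exact div_mul_cancel₀ _ hd
    linear_combination e
  refine ⟨hδ1, ?_⟩
  intro V _ _ x h1 h2 hrec
  have h3 : (3 : ℝ) * (δ + 1) ≠ 0 := mul_ne_zero (by norm_num) hδ1
  have key0 : ((2 * δ + 1) / (3 * (δ + 1))) * (1 / r ^ 2)
      + ((2 * δ + 1) / (3 * (δ + 1))) * (1 / r)
      - (δ / (3 * (δ + 1))) * 1 = 1 / r ^ 3 := by
    field_simp
    linear_combination -hpoly
  have key : ∀ m : ℕ, ((2 * δ + 1) / (3 * (δ + 1))) * (1 / r ^ (m + 2))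
      + ((2 * δ + 1) / (3 * (δ + 1))) * (1 / r ^ (m + 1))
      - (δ / (3 * (δ + 1))) * (1 / r ^ m) = 1 / r ^ (m + 3) := by
    intro m
    calc ((2 * δ + 1) / (3 * (δ + 1))) * (1 / r ^ (m + 2))
          + ((2 * δ + 1) / (3 * (δ + 1))) * (1 / r ^ (m + 1))
          - (δ / (3 * (δ + 1))) * (1 / r ^ m)
        = (1 / r ^ m) * (((2 * δ + 1) / (3 * (δ + 1))) * (1 / r ^ 2)
            + ((2 * δ + 1) / (3 * (δ + 1))) * (1 / r)
            - (δ / (3 * (δ + 1))) * 1) := by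
          rw [pow_add, pow_add]; ring
      _ = (1 / r ^ m) * (1 / r ^ 3) := by rw [key0]
      _ = 1 / r ^ (m + 3) := by rw [pow_add]; ring
  intro k
  induction k using Nat.strong_induction_on with
  | _ k ih =>
    match k with
    | 0 => simp
    | 1 => simpa using h1
    | 2 => simpa using h2
    | (m + 3) =>
      have hr := hrec (m + 2) (by omega)
      simp only [Nat.add_sub_cancel, show m + 2 - 1 = m + 1 from rfl, show m + 2 - 2 = m from rfl] at hr
      rw [hr, ih (m + 2) (by omega), ih (m + 1) (by omega), ih m (by omega),
        smul_smul, smul_smul, smul_smul, ← add_smul, ← sub_smul]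
      congr 1
      exact key m
end

section
/- Let H₁ and H₂ be finite-dimensional real inner product spaces, A : H₁ → Set H₁ and C : H₂ → Set H₂ maximally monotone set-valued operators, B : H₁ → H₁ a monotone L-Lipschitz map with L > 0, and K : H₁ → H₂ a linear map with adjoint K*. Let b ∈ ℝ and τ, σ > 0 satisfy 2τ(1 + |b|)L + τσ‖K‖² < 1, and suppose there exists (x̄, ȳ) ∈ H₁ × H₂ with −B x̄ − K* ȳ ∈ A x̄ and ȳ ∈ C(K x̄). Let (x_k)_{k≥0} in H₁ and (y_k)_{k≥0} in H₂ be sequences satisfying, for all k ≥ 2, the inclusions x_k − τK* y_k − (b+2)τ B x_k + (2b+1)τ B x_{k−1} − bτ B x_{k−2} − x_{k+1} ∈ τ A(x_{k+1}) and y_k + 2σK x_{k+1} − σK x_k − y_{k+1} ∈ σ C⁻¹(y_{k+1}). Then (x_k, y_k) converges to a point (x*, y*) ∈ H₁ × H₂ satisfying −B x* − K* y* ∈ A x* and y* ∈ C(K x*). -/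
set_option maxHeartbeats 1000000
open Filter RealInnerProductSpace Pointwise
lemma mem_of_monotone_rel {H : Type*} [NormedAddCommGroup H] [InnerProductSpace ℝ H]
    (A : H → Set H)
    (hAmono : ∀ x y u v : H, u ∈ A x → v ∈ A y → 0 ≤ ⟪u - v, x - y⟫)
    (hAmax : ∀ A' : H → Set H,
      (∀ x y u v : H, u ∈ A' x → v ∈ A' y → 0 ≤ ⟪u - v, x - y⟫) →
      (∀ x : H, A x ⊆ A' x) → A' = A)
    (x u : H) (h : ∀ z w : H, w ∈ A z → 0 ≤ ⟪u - w, x - z⟫) : u ∈ A x := by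
  set A' : H → Set H := fun z => A z ∪ {w | z = x ∧ w = u} with hA'
  have hmono : ∀ p q r s : H, r ∈ A' p → s ∈ A' q → 0 ≤ ⟪r - s, p - q⟫ := by
    rintro p q r s (hr | ⟨hp1, hp2⟩) (hs | ⟨hq1, hq2⟩)
    · exact hAmono p q r s hr hs
    · rw [hq1, hq2]
      have := h p r hr
      rwa [show r - u = -(u - r) by abel, show p - x = -(x - p) by abel,
        inner_neg_neg]
    · rw [hp1, hp2]
      exact h q s hs
    · rw [hp1, hp2, hq1, hq2]; simp
  have hsub : ∀ z : H, A z ⊆ A' z := fun z => Set.subset_union_left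
  have := hAmax A' hmono hsub
  rw [← this]
  exact Set.mem_union_right _ ⟨rfl, rfl⟩

/-- Graph of a maximally monotone operator is sequentially closed. -/
lemma mem_of_tendsto_graph {H : Type*} [NormedAddCommGroup H] [InnerProductSpace ℝ H]
    (A : H → Set H)
    (hAmono : ∀ x y u v : H, u ∈ A x → v ∈ A y → 0 ≤ ⟪u - v, x - y⟫)
    (hAmax : ∀ A' : H → Set H,
      (∀ x y u v : H, u ∈ A' x → v ∈ A' y → 0 ≤ ⟪u - v, x - y⟫) →
      (∀ x : H, A x ⊆ A' x) → A' = A)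
    (p q : ℕ → H) (x u : H) (hmem : ∀ n, q n ∈ A (p n))
    (hp : Tendsto p atTop (nhds x)) (hq : Tendsto q atTop (nhds u)) : u ∈ A x := by
  refine mem_of_monotone_rel A hAmono hAmax x u (fun z w hw => ?_)
  have h1 : Tendsto (fun n => ⟪q n - w, p n - z⟫) atTop (nhds ⟪u - w, x - z⟫) := by
    exact Tendsto.inner (hq.sub tendsto_const_nhds) (hp.sub tendsto_const_nhds)
  exact le_of_tendsto_of_tendsto' tendsto_const_nhds h1 (fun n => hAmono _ _ _ _ (hmem n) hw)
noncomputable def Vly {H₁ : Type*} [NormedAddCommGroup H₁] [InnerProductSpace ℝ H₁]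
    {H₂ : Type*} [NormedAddCommGroup H₂] [InnerProductSpace ℝ H₂]
    (B : H₁ → H₁) (K : H₁ →L[ℝ] H₂) (b τ σ L : ℝ)
    (x : ℕ → H₁) (y : ℕ → H₂) (x' : H₁) (y' : H₂) (k : ℕ) : ℝ :=
  ‖x k - x'‖^2/(2*τ) + ‖y k - y'‖^2/(2*σ) - ⟪y k - y', K (x k - x')⟫
  - ⟪B (x k) - B (x (k-1)), x k - x'⟫ + b * ⟪B (x (k-1)) - B (x (k-2)), x k - x'⟫
  + ((1+|b|) * L/2)*‖x k - x (k-1)‖^2 + (|b| * L/2)*‖x (k-1) - x (k-2)‖^2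

lemma Vly_step {H₁ : Type*} [NormedAddCommGroup H₁] [InnerProductSpace ℝ H₁]
    [FiniteDimensional ℝ H₁]
    {H₂ : Type*} [NormedAddCommGroup H₂] [InnerProductSpace ℝ H₂]
    [FiniteDimensional ℝ H₂]
    (A : H₁ → Set H₁)
    (hAmono : ∀ x y u v : H₁, u ∈ A x → v ∈ A y → 0 ≤ ⟪u - v, x - y⟫)
    (C : H₂ → Set H₂)
    (hCmono : ∀ x y u v : H₂, u ∈ C x → v ∈ C y → 0 ≤ ⟪u - v, x - y⟫)
    (B : H₁ → H₁) (L : ℝ) (hL : 0 < L)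
    (hBmono : ∀ x y : H₁, 0 ≤ ⟪B x - B y, x - y⟫)
    (hLip : ∀ x y : H₁, ‖B x - B y‖ ≤ L * ‖x - y‖)
    (K : H₁ →L[ℝ] H₂)
    (b τ σ μ : ℝ) (hτ : 0 < τ) (hσ : 0 < σ) (hμ : 0 < μ)
    (x' : H₁) (y' : H₂)
    (hsolA : -B x' - ContinuousLinearMap.adjoint K y' ∈ A x')
    (hsolC : y' ∈ C (K x'))
    (x : ℕ → H₁) (y : ℕ → H₂) (k : ℕ) (hk : 2 ≤ k)
    (hxk : x k - τ • ContinuousLinearMap.adjoint K (y k)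
          - ((b + 2) * τ) • B (x k) + ((2 * b + 1) * τ) • B (x (k - 1))
          - (b * τ) • B (x (k - 2)) - x (k + 1)
        ∈ τ • A (x (k + 1)))
    (hyk : y k + (2 * σ) • K (x (k + 1)) - σ • K (x k) - y (k + 1)
        ∈ σ • {u : H₂ | y (k + 1) ∈ C u}) :
    Vly B K b τ σ L x y x' y' (k+1)
      + (1/(2*τ) - σ*‖K‖^2/(2*μ) - (1+|b|) * L) * ‖x (k+1) - x k‖^2
      + ((1-μ)/(2*σ)) * ‖y (k+1) - y k‖^2
      ≤ Vly B K b τ σ L x y x' y' k := by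
  obtain ⟨u, hu, hτu⟩ := hxk
  obtain ⟨v, hv, hσv⟩ := hyk
  -- primal inequality
  have hA0 : 0 ≤ ⟪u - (-B x' - ContinuousLinearMap.adjoint K y'), x (k+1) - x'⟫ :=
    hAmono _ _ _ _ hu hsolA
  have hA2 : 0 ≤ ⟪(x k - τ • ContinuousLinearMap.adjoint K (y k)
          - ((b + 2) * τ) • B (x k) + ((2 * b + 1) * τ) • B (x (k - 1))
          - (b * τ) • B (x (k - 2)) - x (k + 1))
        - τ • (-B x' - ContinuousLinearMap.adjoint K y'), x (k+1) - x'⟫ := by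
    rw [← hτu, ← smul_sub, real_inner_smul_left]
    exact mul_nonneg hτ.le hA0
  -- dual inequality
  have hC0 : 0 ≤ ⟪y (k+1) - y', v - K x'⟫ := hCmono _ _ _ _ hv hsolC
  have hC2 : 0 ≤ ⟪y (k+1) - y', (y k + (2 * σ) • K (x (k + 1)) - σ • K (x k) - y (k + 1))
      - σ • K x'⟫ := by
    rw [← hσv, ← smul_sub, real_inner_smul_right]
    exact mul_nonneg hσ.le hC0
  -- norm identities
  have i1 : ⟪x k - x (k+1), x (k+1) - x'⟫
      = (‖x k - x'‖^2 - ‖x (k+1) - x k‖^2 - ‖x (k+1) - x'‖^2)/2 := by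
    have h := norm_add_sq_real (x k - x (k+1)) (x (k+1) - x')
    rw [sub_add_sub_cancel, norm_sub_rev (x k) (x (k+1))] at h
    linarith
  have i7 : ⟪y (k+1) - y', y k - y (k+1)⟫
      = (‖y k - y'‖^2 - ‖y (k+1) - y k‖^2 - ‖y (k+1) - y'‖^2)/2 := by
    rw [real_inner_comm]
    have h := norm_add_sq_real (y k - y (k+1)) (y (k+1) - y')
    rw [sub_add_sub_cancel, norm_sub_rev (y k) (y (k+1))] at h
    linarith
  -- bilinear expansion of the primal product
  have hIdA : ⟪(x k - τ • ContinuousLinearMap.adjoint K (y k)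
          - ((b + 2) * τ) • B (x k) + ((2 * b + 1) * τ) • B (x (k - 1))
          - (b * τ) • B (x (k - 2)) - x (k + 1))
        - τ • (-B x' - ContinuousLinearMap.adjoint K y'), x (k+1) - x'⟫
      = ⟪x k - x (k+1), x (k+1) - x'⟫
        + τ * ( -(⟪y k - y', K (x k - x')⟫ + ⟪y k - y', K (x (k+1) - x k)⟫)
          - (⟪B (x (k+1)) - B x', x (k+1) - x'⟫
              - ⟪B (x (k+1)) - B (x k), x (k+1) - x'⟫)
          - (b+1) * (⟪B (x k) - B (x (k-1)), x k - x'⟫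
              + ⟪B (x k) - B (x (k-1)), x (k+1) - x k⟫)
          + b * (⟪B (x (k-1)) - B (x (k-2)), x k - x'⟫
              + ⟪B (x (k-1)) - B (x (k-2)), x (k+1) - x k⟫) ) := by
    simp only [inner_sub_left, inner_add_left, inner_sub_right, inner_add_right,
      real_inner_smul_left, inner_neg_left, map_sub,
      ContinuousLinearMap.adjoint_inner_left]
    ring
  have hA3 : 0 ≤ (‖x k - x'‖^2 - ‖x (k+1) - x k‖^2 - ‖x (k+1) - x'‖^2)/2
        + τ * ( -(⟪y k - y', K (x k - x')⟫ + ⟪y k - y', K (x (k+1) - x k)⟫)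
          - (⟪B (x (k+1)) - B x', x (k+1) - x'⟫
              - ⟪B (x (k+1)) - B (x k), x (k+1) - x'⟫)
          - (b+1) * (⟪B (x k) - B (x (k-1)), x k - x'⟫
              + ⟪B (x k) - B (x (k-1)), x (k+1) - x k⟫)
          + b * (⟪B (x (k-1)) - B (x (k-2)), x k - x'⟫
              + ⟪B (x (k-1)) - B (x (k-2)), x (k+1) - x k⟫) ) := by
    rw [hIdA, i1] at hA2; exact hA2
  have hA5 : 0 ≤ ((‖x k - x'‖^2 - ‖x (k+1) - x k‖^2 - ‖x (k+1) - x'‖^2)/2)/τ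
        + ( -(⟪y k - y', K (x k - x')⟫ + ⟪y k - y', K (x (k+1) - x k)⟫)
          - (⟪B (x (k+1)) - B x', x (k+1) - x'⟫
              - ⟪B (x (k+1)) - B (x k), x (k+1) - x'⟫)
          - (b+1) * (⟪B (x k) - B (x (k-1)), x k - x'⟫
              + ⟪B (x k) - B (x (k-1)), x (k+1) - x k⟫)
          + b * (⟪B (x (k-1)) - B (x (k-2)), x k - x'⟫
              + ⟪B (x (k-1)) - B (x (k-2)), x (k+1) - x k⟫) ) := by
    have h := div_nonneg hA3 hτ.le
    rwa [add_div, mul_div_cancel_left₀ _ (ne_of_gt hτ)] at h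
  -- bilinear expansion of the dual product
  have hIdC : ⟪y (k+1) - y', (y k + (2 * σ) • K (x (k + 1)) - σ • K (x k) - y (k + 1))
      - σ • K x'⟫
      = ⟪y (k+1) - y', y k - y (k+1)⟫
        + σ * ( ⟪y (k+1) - y', K (x (k+1) - x')⟫
          + ⟪y k - y', K (x (k+1) - x k)⟫
          + ⟪y (k+1) - y k, K (x (k+1) - x k)⟫ ) := by
    simp only [inner_sub_left, inner_add_left, inner_sub_right, inner_add_right,
      real_inner_smul_left, real_inner_smul_right, inner_neg_left, map_sub]
    ring
  have hC3 : 0 ≤ (‖y k - y'‖^2 - ‖y (k+1) - y k‖^2 - ‖y (k+1) - y'‖^2)/2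
        + σ * ( ⟪y (k+1) - y', K (x (k+1) - x')⟫
          + ⟪y k - y', K (x (k+1) - x k)⟫
          + ⟪y (k+1) - y k, K (x (k+1) - x k)⟫ ) := by
    rw [hIdC, i7] at hC2; exact hC2
  have hC5 : 0 ≤ ((‖y k - y'‖^2 - ‖y (k+1) - y k‖^2 - ‖y (k+1) - y'‖^2)/2)/σ
        + ( ⟪y (k+1) - y', K (x (k+1) - x')⟫
          + ⟪y k - y', K (x (k+1) - x k)⟫
          + ⟪y (k+1) - y k, K (x (k+1) - x k)⟫ ) := by
    have h := div_nonneg hC3 hσ.le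
    rwa [add_div, mul_div_cancel_left₀ _ (ne_of_gt hσ)] at h
  -- elementary bounds
  have hB1 : 0 ≤ ⟪B (x (k+1)) - B x', x (k+1) - x'⟫ := hBmono _ _
  have hq : ⟪y (k+1) - y k, K (x (k+1) - x k)⟫
      ≤ σ*‖K‖^2/(2*μ)*‖x (k+1) - x k‖^2 + μ/(2*σ)*‖y (k+1) - y k‖^2 := by
    have h1 : ⟪y (k+1) - y k, K (x (k+1) - x k)⟫ ≤ ‖y (k+1) - y k‖ * ‖K (x (k+1) - x k)‖ :=
      real_inner_le_norm _ _
    have h2 : ‖K (x (k+1) - x k)‖ ≤ ‖K‖ * ‖x (k+1) - x k‖ := K.le_opNorm _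
    have h3 : ⟪y (k+1) - y k, K (x (k+1) - x k)⟫ ≤ ‖y (k+1) - y k‖ * (‖K‖ * ‖x (k+1) - x k‖) :=
      le_trans h1 (mul_le_mul_of_nonneg_left h2 (norm_nonneg _))
    have e : σ*‖K‖^2/(2*μ)*‖x (k+1) - x k‖^2 + μ/(2*σ)*‖y (k+1) - y k‖^2
        - ‖y (k+1) - y k‖ * (‖K‖ * ‖x (k+1) - x k‖)
        = (σ*‖K‖*‖x (k+1) - x k‖ - μ*‖y (k+1) - y k‖)^2/(2*σ*μ) := by
      field_simp
      ring
    have e2 : 0 ≤ (σ*‖K‖*‖x (k+1) - x k‖ - μ*‖y (k+1) - y k‖)^2/(2*σ*μ) := by positivity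
    linarith [e, e2, h3]
  have hΔ1 : ‖B (x k) - B (x (k-1))‖ ≤ L * ‖x k - x (k-1)‖ := hLip _ _
  have hΔ2 : ‖B (x (k-1)) - B (x (k-2))‖ ≤ L * ‖x (k-1) - x (k-2)‖ := hLip _ _
  have hn1 : -(L/2*(‖x k - x (k-1)‖^2 + ‖x (k+1) - x k‖^2))
      ≤ ⟪B (x k) - B (x (k-1)), x (k+1) - x k⟫ := by
    have h1 := abs_real_inner_le_norm (B (x k) - B (x (k-1))) (x (k+1) - x k)
    have h2 : |⟪B (x k) - B (x (k-1)), x (k+1) - x k⟫| ≤ L * ‖x k - x (k-1)‖ * ‖x (k+1) - x k‖ :=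
      le_trans h1 (mul_le_mul_of_nonneg_right hΔ1 (norm_nonneg _))
    have h4 := neg_abs_le ⟪B (x k) - B (x (k-1)), x (k+1) - x k⟫
    nlinarith [mul_nonneg hL.le (sq_nonneg (‖x k - x (k-1)‖ - ‖x (k+1) - x k‖))]
  have hn0 : b * ⟪B (x (k-1)) - B (x (k-2)), x (k+1) - x k⟫
      ≤ |b| * L/2*(‖x (k-1) - x (k-2)‖^2 + ‖x (k+1) - x k‖^2) := by
    have h1 := abs_real_inner_le_norm (B (x (k-1)) - B (x (k-2))) (x (k+1) - x k)
    have h2 : |⟪B (x (k-1)) - B (x (k-2)), x (k+1) - x k⟫|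
        ≤ L * ‖x (k-1) - x (k-2)‖ * ‖x (k+1) - x k‖ :=
      le_trans h1 (mul_le_mul_of_nonneg_right hΔ2 (norm_nonneg _))
    have h3 : |b * ⟪B (x (k-1)) - B (x (k-2)), x (k+1) - x k⟫|
        ≤ |b| * (L * ‖x (k-1) - x (k-2)‖ * ‖x (k+1) - x k‖) := by
      rw [abs_mul]
      exact mul_le_mul_of_nonneg_left h2 (abs_nonneg b)
    have h4 := le_abs_self (b * ⟪B (x (k-1)) - B (x (k-2)), x (k+1) - x k⟫)
    nlinarith [mul_nonneg (mul_nonneg (abs_nonneg b) hL.le)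
      (sq_nonneg (‖x (k-1) - x (k-2)‖ - ‖x (k+1) - x k‖))]
  -- assemble
  have ek1 : k+1-1 = k := by omega
  have ek2 : k+1-2 = k-1 := by omega
  have isplit : b * ⟪B (x k) - B (x (k-1)), x (k+1) - x'⟫
      = b * ⟪B (x k) - B (x (k-1)), x k - x'⟫
        + b * ⟪B (x k) - B (x (k-1)), x (k+1) - x k⟫ := by
    rw [← mul_add, ← inner_add_right]
    congr 2
    abel
  simp only [Vly, ek1, ek2]
  ring_nf at hA5 hC5 hB1 hq hn1 hn0 isplit ⊢
  linarith only [hA5, hC5, hB1, hq, hn1, hn0, isplit]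
lemma Vly_lower {H₁ : Type*} [NormedAddCommGroup H₁] [InnerProductSpace ℝ H₁]
    {H₂ : Type*} [NormedAddCommGroup H₂] [InnerProductSpace ℝ H₂]
    (B : H₁ → H₁) (L : ℝ) (hL : 0 < L)
    (hLip : ∀ x y : H₁, ‖B x - B y‖ ≤ L * ‖x - y‖)
    (K : H₁ →L[ℝ] H₂)
    (b τ σ μ : ℝ) (hτ : 0 < τ) (hσ : 0 < σ) (hμ : 0 < μ)
    (x : ℕ → H₁) (y : ℕ → H₂) (x' : H₁) (y' : H₂) (k : ℕ) :
    (1/(2*τ) - σ*‖K‖^2/(2*μ) - (1+|b|) * L) * ‖x k - x'‖^2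
      + ((1-μ)/(2*σ)) * ‖y k - y'‖^2
    ≤ Vly B K b τ σ L x y x' y' k := by
  have hS : ⟪y k - y', K (x k - x')⟫ ≤ σ*‖K‖^2/(2*μ)*‖x k - x'‖^2 + μ/(2*σ)*‖y k - y'‖^2 := by
    have h1 : ⟪y k - y', K (x k - x')⟫ ≤ ‖y k - y'‖ * ‖K (x k - x')‖ := real_inner_le_norm _ _
    have h2 : ‖K (x k - x')‖ ≤ ‖K‖ * ‖x k - x'‖ := K.le_opNorm _
    have h3 : ⟪y k - y', K (x k - x')⟫ ≤ ‖y k - y'‖ * (‖K‖ * ‖x k - x'‖) :=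
      le_trans h1 (mul_le_mul_of_nonneg_left h2 (norm_nonneg _))
    have e : σ*‖K‖^2/(2*μ)*‖x k - x'‖^2 + μ/(2*σ)*‖y k - y'‖^2
        - ‖y k - y'‖ * (‖K‖ * ‖x k - x'‖)
        = (σ*‖K‖*‖x k - x'‖ - μ*‖y k - y'‖)^2/(2*σ*μ) := by
      field_simp
      ring
    have e2 : 0 ≤ (σ*‖K‖*‖x k - x'‖ - μ*‖y k - y'‖)^2/(2*σ*μ) := by positivity
    linarith [e, e2, h3]
  have hm1 : ⟪B (x k) - B (x (k-1)), x k - x'⟫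
      ≤ L/2*(‖x k - x (k-1)‖^2 + ‖x k - x'‖^2) := by
    have h1 := abs_real_inner_le_norm (B (x k) - B (x (k-1))) (x k - x')
    have h2 : |⟪B (x k) - B (x (k-1)), x k - x'⟫| ≤ L * ‖x k - x (k-1)‖ * ‖x k - x'‖ :=
      le_trans h1 (mul_le_mul_of_nonneg_right (hLip _ _) (norm_nonneg _))
    have h4 := le_abs_self ⟪B (x k) - B (x (k-1)), x k - x'⟫
    nlinarith [mul_nonneg hL.le (sq_nonneg (‖x k - x (k-1)‖ - ‖x k - x'‖))]
  have hm0 : -(|b| * L/2*(‖x (k-1) - x (k-2)‖^2 + ‖x k - x'‖^2))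
      ≤ b * ⟪B (x (k-1)) - B (x (k-2)), x k - x'⟫ := by
    have h1 := abs_real_inner_le_norm (B (x (k-1)) - B (x (k-2))) (x k - x')
    have h2 : |⟪B (x (k-1)) - B (x (k-2)), x k - x'⟫|
        ≤ L * ‖x (k-1) - x (k-2)‖ * ‖x k - x'‖ :=
      le_trans h1 (mul_le_mul_of_nonneg_right (hLip _ _) (norm_nonneg _))
    have h3 : |b * ⟪B (x (k-1)) - B (x (k-2)), x k - x'⟫|
        ≤ |b| * (L * ‖x (k-1) - x (k-2)‖ * ‖x k - x'‖) := by
      rw [abs_mul]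
      exact mul_le_mul_of_nonneg_left h2 (abs_nonneg b)
    have h4 := neg_abs_le (b * ⟪B (x (k-1)) - B (x (k-2)), x k - x'⟫)
    nlinarith [mul_nonneg (mul_nonneg (abs_nonneg b) hL.le)
      (sq_nonneg (‖x (k-1) - x (k-2)‖ - ‖x k - x'‖))]
  have p1 : 0 ≤ L * ‖x k - x'‖^2 := by positivity
  have p2 : 0 ≤ |b| * (L * ‖x k - x'‖^2) := by positivity
  have p3 : 0 ≤ |b| * (L * ‖x k - x (k-1)‖^2) := by positivity
  simp only [Vly]
  ring_nf at hS hm1 hm0 p1 p2 p3 ⊢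
  linarith only [hS, hm1, hm0, p1, p2, p3]

/-- Convergence of the extended primal–dual twice-reflected algorithm (EPDTR)
for the inclusion `0 ∈ (A + B + K*CK)(x)` in finite dimensions. -/
theorem epdtr_convergence
    {H₁ : Type*} [NormedAddCommGroup H₁] [InnerProductSpace ℝ H₁]
    [FiniteDimensional ℝ H₁]
    {H₂ : Type*} [NormedAddCommGroup H₂] [InnerProductSpace ℝ H₂]
    [FiniteDimensional ℝ H₂]
    (A : H₁ → Set H₁)
    (hAmono : ∀ x y u v : H₁, u ∈ A x → v ∈ A y → 0 ≤ ⟪u - v, x - y⟫)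
    (hAmax : ∀ A' : H₁ → Set H₁,
      (∀ x y u v : H₁, u ∈ A' x → v ∈ A' y → 0 ≤ ⟪u - v, x - y⟫) →
      (∀ x : H₁, A x ⊆ A' x) → A' = A)
    (C : H₂ → Set H₂)
    (hCmono : ∀ x y u v : H₂, u ∈ C x → v ∈ C y → 0 ≤ ⟪u - v, x - y⟫)
    (hCmax : ∀ C' : H₂ → Set H₂,
      (∀ x y u v : H₂, u ∈ C' x → v ∈ C' y → 0 ≤ ⟪u - v, x - y⟫) →
      (∀ x : H₂, C x ⊆ C' x) → C' = C)
    (B : H₁ → H₁) (L : ℝ) (hL : 0 < L)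
    (hBmono : ∀ x y : H₁, 0 ≤ ⟪B x - B y, x - y⟫)
    (hLip : ∀ x y : H₁, ‖B x - B y‖ ≤ L * ‖x - y‖)
    (K : H₁ →L[ℝ] H₂)
    (b τ σ : ℝ) (hτ : 0 < τ) (hσ : 0 < σ)
    (hstep : 2 * τ * (1 + |b|) * L + τ * σ * ‖K‖ ^ 2 < 1)
    (hsol : ∃ p : H₁ × H₂,
      -B p.1 - ContinuousLinearMap.adjoint K p.2 ∈ A p.1 ∧ p.2 ∈ C (K p.1))
    (x : ℕ → H₁) (y : ℕ → H₂)
    (hx : ∀ k : ℕ, 2 ≤ k →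
      x k - τ • ContinuousLinearMap.adjoint K (y k)
          - ((b + 2) * τ) • B (x k) + ((2 * b + 1) * τ) • B (x (k - 1))
          - (b * τ) • B (x (k - 2)) - x (k + 1)
        ∈ τ • A (x (k + 1)))
    (hy : ∀ k : ℕ, 2 ≤ k →
      y k + (2 * σ) • K (x (k + 1)) - σ • K (x k) - y (k + 1)
        ∈ σ • {u : H₂ | y (k + 1) ∈ C u}) :
    ∃ p : H₁ × H₂,
      -B p.1 - ContinuousLinearMap.adjoint K p.2 ∈ A p.1 ∧
      p.2 ∈ C (K p.1) ∧
      Tendsto (fun k => (x k, y k)) atTop (nhds p) := by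
  classical
  obtain ⟨pb, hpbA, hpbC⟩ := hsol
  -- choice of the auxiliary parameter μ
  obtain ⟨μ, hμ, hμ1, hγ⟩ : ∃ μ : ℝ, 0 < μ ∧ μ < 1 ∧
      0 < 1/(2*τ) - σ*‖K‖^2/(2*μ) - (1+|b|) * L := by
    have hD : 0 < 1 - 2*τ*(1+|b|)*L := by nlinarith [mul_nonneg (mul_nonneg hτ.le hσ.le) (sq_nonneg ‖K‖)]
    refine ⟨(τ*σ*‖K‖^2/(1 - 2*τ*(1+|b|)*L) + 1)/2, ?_, ?_, ?_⟩
    · have := div_nonneg (by positivity : (0:ℝ) ≤ τ*σ*‖K‖^2) hD.le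
      linarith
    · have : τ*σ*‖K‖^2/(1 - 2*τ*(1+|b|)*L) < 1 := (div_lt_one hD).2 (by nlinarith)
      linarith
    · set m : ℝ := (τ*σ*‖K‖^2/(1 - 2*τ*(1+|b|)*L) + 1)/2 with hm
      have hm0 : 0 < m := by
        have := div_nonneg (by positivity : (0:ℝ) ≤ τ*σ*‖K‖^2) hD.le
        rw [hm]; linarith
      have h1 : τ*σ*‖K‖^2 < m*(1 - 2*τ*(1+|b|)*L) := by
        have h2 : τ*σ*‖K‖^2/(1 - 2*τ*(1+|b|)*L)*(1 - 2*τ*(1+|b|)*L) = τ*σ*‖K‖^2 :=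
          div_mul_cancel₀ _ hD.ne'
        have h3 : τ*σ*‖K‖^2/(1 - 2*τ*(1+|b|)*L) < 1 := (div_lt_one hD).2 (by nlinarith)
        nlinarith
      have h3 : σ*‖K‖^2/(2*m) < (1 - 2*τ*(1+|b|)*L)/(2*τ) := by
        rw [div_lt_div_iff₀ (by positivity) (by positivity)]
        nlinarith
      have h4 : (1 - 2*τ*(1+|b|)*L)/(2*τ) = 1/(2*τ) - (1+|b|)*L := by
        field_simp
      linarith
  have hβ : 0 < (1-μ)/(2*σ) := div_pos (by linarith) (by positivity)
  -- the one-step descent inequality, valid for any primal-dual solution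
  have step : ∀ (x' : H₁) (y' : H₂),
      -B x' - ContinuousLinearMap.adjoint K y' ∈ A x' → y' ∈ C (K x') →
      ∀ k, 2 ≤ k →
      Vly B K b τ σ L x y x' y' (k+1)
        + (1/(2*τ) - σ*‖K‖^2/(2*μ) - (1+|b|) * L) * ‖x (k+1) - x k‖^2
        + ((1-μ)/(2*σ)) * ‖y (k+1) - y k‖^2
        ≤ Vly B K b τ σ L x y x' y' k :=
    fun x' y' hA' hC' k hk =>
      Vly_step A hAmono C hCmono B L hL hBmono hLip K b τ σ μ hτ hσ hμ x' y' hA' hC'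
        x y k hk (hx k hk) (hy k hk)
  have low : ∀ (x' : H₁) (y' : H₂) (k : ℕ),
      (1/(2*τ) - σ*‖K‖^2/(2*μ) - (1+|b|) * L) * ‖x k - x'‖^2
        + ((1-μ)/(2*σ)) * ‖y k - y'‖^2 ≤ Vly B K b τ σ L x y x' y' k :=
    fun x' y' k => Vly_lower B L hL hLip K b τ σ μ hτ hσ hμ x y x' y' k
  have Vnn : ∀ (x' : H₁) (y' : H₂) (k : ℕ), 0 ≤ Vly B K b τ σ L x y x' y' k :=
    fun x' y' k => le_trans
      (add_nonneg (mul_nonneg hγ.le (sq_nonneg _)) (mul_nonneg hβ.le (sq_nonneg _)))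
      (low x' y' k)
  have key : ∀ (x' : H₁) (y' : H₂),
      -B x' - ContinuousLinearMap.adjoint K y' ∈ A x' → y' ∈ C (K x') →
      ∀ m n, 2 ≤ m → m ≤ n →
      Vly B K b τ σ L x y x' y' n ≤ Vly B K b τ σ L x y x' y' m := by
    intro x' y' hA' hC' m n h2 hmn
    induction n, hmn using Nat.le_induction with
    | base => exact le_refl _
    | succ n hn ih =>
      have h := step x' y' hA' hC' n (le_trans h2 hn)
      have h1 := mul_nonneg hγ.le (sq_nonneg ‖x (n+1) - x n‖)
      have h2' := mul_nonneg hβ.le (sq_nonneg ‖y (n+1) - y n‖)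
      linarith
  -- differences tend to zero
  have hsummand : ∀ n : ℕ,
      (1/(2*τ) - σ*‖K‖^2/(2*μ) - (1+|b|) * L) * ‖x (n+2+1) - x (n+2)‖^2
        + ((1-μ)/(2*σ)) * ‖y (n+2+1) - y (n+2)‖^2
      ≤ Vly B K b τ σ L x y pb.1 pb.2 (n+2) - Vly B K b τ σ L x y pb.1 pb.2 (n+2+1) := by
    intro n
    have h := step pb.1 pb.2 hpbA hpbC (n+2) (by omega)
    linarith
  have hpartial : ∀ n : ℕ,
      ∑ i ∈ Finset.range n,
        ((1/(2*τ) - σ*‖K‖^2/(2*μ) - (1+|b|) * L) * ‖x (i+2+1) - x (i+2)‖^2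
          + ((1-μ)/(2*σ)) * ‖y (i+2+1) - y (i+2)‖^2)
      ≤ Vly B K b τ σ L x y pb.1 pb.2 2 := by
    intro n
    have h1 : ∑ i ∈ Finset.range n,
        ((1/(2*τ) - σ*‖K‖^2/(2*μ) - (1+|b|) * L) * ‖x (i+2+1) - x (i+2)‖^2
          + ((1-μ)/(2*σ)) * ‖y (i+2+1) - y (i+2)‖^2)
        ≤ ∑ i ∈ Finset.range n,
          ((fun j => Vly B K b τ σ L x y pb.1 pb.2 (j+2)) i
            - (fun j => Vly B K b τ σ L x y pb.1 pb.2 (j+2)) (i+1)) := by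
      refine Finset.sum_le_sum (fun i _ => ?_)
      have := hsummand i
      have e : i+1+2 = i+2+1 := by omega
      simp only [e]
      linarith
    rw [Finset.sum_range_sub' (fun j => Vly B K b τ σ L x y pb.1 pb.2 (j+2)) n] at h1
    have h3 := Vnn pb.1 pb.2 (n+2)
    linarith
  have hsummable : Summable (fun n : ℕ =>
      (1/(2*τ) - σ*‖K‖^2/(2*μ) - (1+|b|) * L) * ‖x (n+2+1) - x (n+2)‖^2
        + ((1-μ)/(2*σ)) * ‖y (n+2+1) - y (n+2)‖^2) :=
    summable_of_sum_range_le
      (fun n => add_nonneg (mul_nonneg hγ.le (sq_nonneg _)) (mul_nonneg hβ.le (sq_nonneg _)))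
      hpartial
  have hterm := hsummable.tendsto_atTop_zero
  have hdxsq : Tendsto (fun n => ‖x (n+1) - x n‖^2) atTop (nhds 0) := by
    rw [← tendsto_add_atTop_iff_nat 2]
    have h1 : Tendsto (fun n : ℕ =>
        (1/(2*τ) - σ*‖K‖^2/(2*μ) - (1+|b|) * L) * ‖x (n+2+1) - x (n+2)‖^2) atTop (nhds 0) :=
      squeeze_zero (fun n => mul_nonneg hγ.le (sq_nonneg _))
        (fun n => le_add_of_nonneg_right (mul_nonneg hβ.le (sq_nonneg _))) hterm
    have h2 := h1.const_mul (1/(2*τ) - σ*‖K‖^2/(2*μ) - (1+|b|) * L)⁻¹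
    simp only [mul_zero] at h2
    have h3 : (fun n : ℕ => (1/(2*τ) - σ*‖K‖^2/(2*μ) - (1+|b|) * L)⁻¹ *
        ((1/(2*τ) - σ*‖K‖^2/(2*μ) - (1+|b|) * L) * ‖x (n+2+1) - x (n+2)‖^2))
        = fun n : ℕ => ‖x (n+2+1) - x (n+2)‖^2 := by
      funext n
      rw [← mul_assoc, inv_mul_cancel₀ hγ.ne', one_mul]
    rw [h3] at h2
    have e : ∀ n : ℕ, n+2+1 = n+2+1 := fun n => rfl
    exact h2
  have hdysq : Tendsto (fun n => ‖y (n+1) - y n‖^2) atTop (nhds 0) := by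
    rw [← tendsto_add_atTop_iff_nat 2]
    have h1 : Tendsto (fun n : ℕ =>
        ((1-μ)/(2*σ)) * ‖y (n+2+1) - y (n+2)‖^2) atTop (nhds 0) :=
      squeeze_zero (fun n => mul_nonneg hβ.le (sq_nonneg _))
        (fun n => le_add_of_nonneg_left (mul_nonneg hγ.le (sq_nonneg _))) hterm
    have h2 := h1.const_mul ((1-μ)/(2*σ))⁻¹
    simp only [mul_zero] at h2
    have h3 : (fun n : ℕ => ((1-μ)/(2*σ))⁻¹ * (((1-μ)/(2*σ)) * ‖y (n+2+1) - y (n+2)‖^2))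
        = fun n : ℕ => ‖y (n+2+1) - y (n+2)‖^2 := by
      funext n
      rw [← mul_assoc, inv_mul_cancel₀ hβ.ne', one_mul]
    rw [h3] at h2
    exact h2
  have hdx : Tendsto (fun n => x (n+1) - x n) atTop (nhds 0) := by
    rw [tendsto_zero_iff_norm_tendsto_zero]
    have h1 : (fun n => ‖x (n+1) - x n‖) = fun n => Real.sqrt (‖x (n+1) - x n‖^2) :=
      funext fun n => (Real.sqrt_sq (norm_nonneg _)).symm
    rw [h1]
    simpa using hdxsq.sqrt
  have hdy : Tendsto (fun n => y (n+1) - y n) atTop (nhds 0) := by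
    rw [tendsto_zero_iff_norm_tendsto_zero]
    have h1 : (fun n => ‖y (n+1) - y n‖) = fun n => Real.sqrt (‖y (n+1) - y n‖^2) :=
      funext fun n => (Real.sqrt_sq (norm_nonneg _)).symm
    rw [h1]
    simpa using hdysq.sqrt
  -- boundedness of the iterates
  have hbound : ∀ k, 2 ≤ k →
      (1/(2*τ) - σ*‖K‖^2/(2*μ) - (1+|b|) * L) * ‖x k - pb.1‖^2
        + ((1-μ)/(2*σ)) * ‖y k - pb.2‖^2 ≤ Vly B K b τ σ L x y pb.1 pb.2 2 :=
    fun k hk => le_trans (low pb.1 pb.2 k) (key pb.1 pb.2 hpbA hpbC 2 k le_rfl hk)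
  set R : ℝ := (Real.sqrt (Vly B K b τ σ L x y pb.1 pb.2 2
        / (1/(2*τ) - σ*‖K‖^2/(2*μ) - (1+|b|) * L))
      + Real.sqrt (Vly B K b τ σ L x y pb.1 pb.2 2 / ((1-μ)/(2*σ))))
      ⊔ (‖(x 0, y 0) - pb‖ ⊔ ‖(x 1, y 1) - pb‖) with hR
  have hmem : ∀ k : ℕ, (x k, y k) ∈ Metric.closedBall pb R := by
    intro k
    rw [Metric.mem_closedBall, dist_eq_norm]
    match k, (by omega : k = 0 ∨ k = 1 ∨ 2 ≤ k) with
    | 0, _ => exact le_trans (le_max_left _ _) (le_max_right _ _)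
    | 1, _ => exact le_trans (le_max_right _ _) (le_max_right _ _)
    | (k+2), _ =>
      refine le_trans ?_ (le_max_left _ _)
      have hb := hbound (k+2) (by omega)
      have hx2 : ‖x (k+2) - pb.1‖
          ≤ Real.sqrt (Vly B K b τ σ L x y pb.1 pb.2 2
            / (1/(2*τ) - σ*‖K‖^2/(2*μ) - (1+|b|) * L)) := by
        rw [show ‖x (k+2) - pb.1‖ = Real.sqrt (‖x (k+2) - pb.1‖^2) from
          (Real.sqrt_sq (norm_nonneg _)).symm]
        apply Real.sqrt_le_sqrt
        rw [le_div_iff₀ hγ]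
        nlinarith [mul_nonneg hβ.le (sq_nonneg ‖y (k+2) - pb.2‖)]
      have hy2 : ‖y (k+2) - pb.2‖
          ≤ Real.sqrt (Vly B K b τ σ L x y pb.1 pb.2 2 / ((1-μ)/(2*σ))) := by
        rw [show ‖y (k+2) - pb.2‖ = Real.sqrt (‖y (k+2) - pb.2‖^2) from
          (Real.sqrt_sq (norm_nonneg _)).symm]
        apply Real.sqrt_le_sqrt
        rw [le_div_iff₀ hβ]
        nlinarith [mul_nonneg hγ.le (sq_nonneg ‖x (k+2) - pb.1‖)]
      have hnp : ‖(x (k+2), y (k+2)) - pb‖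
          = ‖x (k+2) - pb.1‖ ⊔ ‖y (k+2) - pb.2‖ := by
        rw [Prod.norm_def]
        rfl
      rw [hnp]
      have s1 : (0:ℝ) ≤ Real.sqrt (Vly B K b τ σ L x y pb.1 pb.2 2 / ((1-μ)/(2*σ))) :=
        Real.sqrt_nonneg _
      have s2 : (0:ℝ) ≤ Real.sqrt (Vly B K b τ σ L x y pb.1 pb.2 2
          / (1/(2*τ) - σ*‖K‖^2/(2*μ) - (1+|b|) * L)) := Real.sqrt_nonneg _
      exact sup_le (by linarith) (by linarith)
  obtain ⟨p, hpball, φ, hφ, hzφ⟩ :=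
    (isCompact_closedBall (pb : H₁ × H₂) R).tendsto_subseq hmem
  -- limits of shifted subsequences
  have hxφ : Tendsto (fun n => x (φ n)) atTop (nhds p.1) :=
    ((continuous_fst.tendsto p).comp hzφ)
  have hyφ : Tendsto (fun n => y (φ n)) atTop (nhds p.2) :=
    ((continuous_snd.tendsto p).comp hzφ)
  set ψ : ℕ → ℕ := fun n => φ (n + 2) with hψdef
  have hψ2 : ∀ n, 2 ≤ ψ n := fun n => le_trans (by omega) (hφ.le_apply (x := n+2))
  have hψbig : ∀ n, n + 2 ≤ ψ n := fun n => hφ.le_apply (x := n+2)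
  have hplus2 : Tendsto (fun n : ℕ => n + 2) atTop atTop :=
    tendsto_atTop_mono (fun n => Nat.le_add_right n 2) tendsto_id
  have hψtop : Tendsto ψ atTop atTop := hφ.tendsto_atTop.comp hplus2
  have hxψ : Tendsto (fun n => x (ψ n)) atTop (nhds p.1) := hxφ.comp hplus2
  have hyψ : Tendsto (fun n => y (ψ n)) atTop (nhds p.2) := hyφ.comp hplus2
  have hxψ1 : Tendsto (fun n => x (ψ n + 1)) atTop (nhds p.1) := by
    have h1 : (fun n => x (ψ n + 1)) = fun n => x (ψ n) + (x (ψ n + 1) - x (ψ n)) := by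
      funext n; abel
    rw [h1]
    simpa using hxψ.add (hdx.comp hψtop)
  have hyψ1 : Tendsto (fun n => y (ψ n + 1)) atTop (nhds p.2) := by
    have h1 : (fun n => y (ψ n + 1)) = fun n => y (ψ n) + (y (ψ n + 1) - y (ψ n)) := by
      funext n; abel
    rw [h1]
    simpa using hyψ.add (hdy.comp hψtop)
  have hdψ1 : Tendsto (fun n => x (ψ n - 1 + 1) - x (ψ n - 1)) atTop (nhds 0) :=
    hdx.comp (tendsto_atTop_mono
      (fun n => show id n ≤ ψ n - 1 by simp only [id]; have := hψbig n; omega) tendsto_id)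
  have hdψ2 : Tendsto (fun n => x (ψ n - 2 + 1) - x (ψ n - 2)) atTop (nhds 0) :=
    hdx.comp (tendsto_atTop_mono
      (fun n => show id n ≤ ψ n - 2 by simp only [id]; have := hψbig n; omega) tendsto_id)
  have hxψm1 : Tendsto (fun n => x (ψ n - 1)) atTop (nhds p.1) := by
    have h1 : (fun n => x (ψ n - 1))
        = fun n => x (ψ n) - (x (ψ n - 1 + 1) - x (ψ n - 1)) := by
      funext n
      have e : ψ n - 1 + 1 = ψ n := by have := hψ2 n; omega
      rw [e]; abel
    rw [h1]
    simpa using hxψ.sub hdψ1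
  have hxψm2 : Tendsto (fun n => x (ψ n - 2)) atTop (nhds p.1) := by
    have h1 : (fun n => x (ψ n - 2))
        = fun n => x (ψ n - 1) - (x (ψ n - 2 + 1) - x (ψ n - 2)) := by
      funext n
      have e : ψ n - 2 + 1 = ψ n - 1 := by have := hψ2 n; omega
      rw [e]; abel
    rw [h1]
    simpa using hxψm1.sub hdψ2
  -- continuity of B
  have hBc : Continuous B := by
    have : LipschitzWith (Real.toNNReal L) B := by
      apply LipschitzWith.of_dist_le_mul
      intro a a'
      rw [dist_eq_norm, dist_eq_norm, Real.coe_toNNReal L hL.le]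
      exact hLip a a'
    exact this.continuous
  have hBψ : Tendsto (fun n => B (x (ψ n))) atTop (nhds (B p.1)) :=
    (hBc.tendsto p.1).comp hxψ
  have hBψm1 : Tendsto (fun n => B (x (ψ n - 1))) atTop (nhds (B p.1)) :=
    (hBc.tendsto p.1).comp hxψm1
  have hBψm2 : Tendsto (fun n => B (x (ψ n - 2))) atTop (nhds (B p.1)) :=
    (hBc.tendsto p.1).comp hxψm2
  have hKψ1 : Tendsto (fun n => K (x (ψ n + 1))) atTop (nhds (K p.1)) :=
    ((K.continuous.tendsto p.1).comp hxψ1)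
  have hKψ : Tendsto (fun n => K (x (ψ n))) atTop (nhds (K p.1)) :=
    ((K.continuous.tendsto p.1).comp hxψ)
  have hKadψ : Tendsto (fun n => ContinuousLinearMap.adjoint K (y (ψ n))) atTop
      (nhds (ContinuousLinearMap.adjoint K p.2)) :=
    (((ContinuousLinearMap.adjoint K).continuous.tendsto p.2).comp hyψ)
  -- the cluster point is a primal-dual solution
  have hUmem : ∀ k, 2 ≤ k →
      τ⁻¹ • (x k - τ • ContinuousLinearMap.adjoint K (y k)
          - ((b + 2) * τ) • B (x k) + ((2 * b + 1) * τ) • B (x (k - 1))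
          - (b * τ) • B (x (k - 2)) - x (k + 1)) ∈ A (x (k + 1)) := by
    intro k hk
    obtain ⟨u, hu, hτu⟩ := hx k hk
    rw [← hτu]
    simpa [inv_smul_smul₀ hτ.ne'] using hu
  have hUlim : Tendsto (fun n => τ⁻¹ • (x (ψ n) - τ • ContinuousLinearMap.adjoint K (y (ψ n))
      - ((b + 2) * τ) • B (x (ψ n)) + ((2 * b + 1) * τ) • B (x (ψ n - 1))
      - (b * τ) • B (x (ψ n - 2)) - x (ψ n + 1))) atTop
      (nhds (-B p.1 - ContinuousLinearMap.adjoint K p.2)) := by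
    have h1 := (((((hxψ.sub (hKadψ.const_smul τ)).sub
        (hBψ.const_smul ((b+2)*τ))).add
        (hBψm1.const_smul ((2*b+1)*τ))).sub
        (hBψm2.const_smul (b*τ))).sub hxψ1).const_smul τ⁻¹
    have e : τ⁻¹ • (p.1 - τ • ContinuousLinearMap.adjoint K p.2
        - ((b + 2) * τ) • B p.1 + ((2 * b + 1) * τ) • B p.1
        - (b * τ) • B p.1 - p.1) = -B p.1 - ContinuousLinearMap.adjoint K p.2 := by
      have e2 : p.1 - τ • ContinuousLinearMap.adjoint K p.2
          - ((b + 2) * τ) • B p.1 + ((2 * b + 1) * τ) • B p.1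
          - (b * τ) • B p.1 - p.1
          = τ • (-B p.1 - ContinuousLinearMap.adjoint K p.2) := by
        module
      rw [e2, inv_smul_smul₀ hτ.ne']
    rw [← e]
    exact h1
  have hsolA : -B p.1 - ContinuousLinearMap.adjoint K p.2 ∈ A p.1 := by
    refine mem_of_tendsto_graph A hAmono hAmax
      (fun n => x (ψ n + 1))
      (fun n => τ⁻¹ • (x (ψ n) - τ • ContinuousLinearMap.adjoint K (y (ψ n))
        - ((b + 2) * τ) • B (x (ψ n)) + ((2 * b + 1) * τ) • B (x (ψ n - 1))
        - (b * τ) • B (x (ψ n - 2)) - x (ψ n + 1)))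
      p.1 (-B p.1 - ContinuousLinearMap.adjoint K p.2)
      (fun n => hUmem (ψ n) (hψ2 n)) hxψ1 hUlim
  have hWmem : ∀ k, 2 ≤ k →
      y (k + 1) ∈ C (σ⁻¹ • (y k + (2 * σ) • K (x (k + 1)) - σ • K (x k) - y (k + 1))) := by
    intro k hk
    obtain ⟨v, hv, hσv⟩ := hy k hk
    rw [← hσv]
    simpa [inv_smul_smul₀ hσ.ne'] using hv
  have hWlim : Tendsto (fun n => σ⁻¹ • (y (ψ n) + (2 * σ) • K (x (ψ n + 1))
      - σ • K (x (ψ n)) - y (ψ n + 1))) atTop (nhds (K p.1)) := by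
    have h1 := (((hyψ.add (hKψ1.const_smul (2*σ))).sub
        (hKψ.const_smul σ)).sub hyψ1).const_smul σ⁻¹
    have e : σ⁻¹ • (p.2 + (2 * σ) • K p.1 - σ • K p.1 - p.2) = K p.1 := by
      have e2 : p.2 + (2 * σ) • K p.1 - σ • K p.1 - p.2 = σ • K p.1 := by module
      rw [e2, inv_smul_smul₀ hσ.ne']
    rw [← e]
    exact h1
  have hsolC : p.2 ∈ C (K p.1) := by
    refine mem_of_tendsto_graph C hCmono hCmax
      (fun n => σ⁻¹ • (y (ψ n) + (2 * σ) • K (x (ψ n + 1))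
        - σ • K (x (ψ n)) - y (ψ n + 1)))
      (fun n => y (ψ n + 1)) (K p.1) p.2
      (fun n => hWmem (ψ n) (hψ2 n)) hWlim hyψ1
  -- the Lyapunov function centered at the cluster point tends to zero on the subsequence
  have ha0 : Tendsto (fun n => x (ψ n) - p.1) atTop (nhds 0) := by
    simpa using hxψ.sub (tendsto_const_nhds (x := p.1))
  have hc0 : Tendsto (fun n => y (ψ n) - p.2) atTop (nhds 0) := by
    simpa using hyψ.sub (tendsto_const_nhds (x := p.2))
  have pA : Tendsto (fun n => ‖x (ψ n) - p.1‖^2/(2*τ)) atTop (nhds 0) := by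
    simpa using (ha0.norm.pow 2).div_const (2*τ)
  have pB : Tendsto (fun n => ‖y (ψ n) - p.2‖^2/(2*σ)) atTop (nhds 0) := by
    simpa using (hc0.norm.pow 2).div_const (2*σ)
  have hKa0 : Tendsto (fun n => K (x (ψ n) - p.1)) atTop (nhds 0) := by
    have h := (K.continuous.tendsto (0:H₁)).comp ha0
    rw [map_zero] at h
    exact h
  have pS : Tendsto (fun n => ⟪y (ψ n) - p.2, K (x (ψ n) - p.1)⟫) atTop (nhds 0) := by
    simpa using hc0.inner (𝕜 := ℝ) hKa0
  have pT1 : Tendsto (fun n => ⟪B (x (ψ n)) - B (x (ψ n - 1)), x (ψ n) - p.1⟫)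
      atTop (nhds 0) := by
    simpa using (hBψ.sub hBψm1).inner (𝕜 := ℝ) ha0
  have pT2 : Tendsto (fun n => b * ⟪B (x (ψ n - 1)) - B (x (ψ n - 2)), x (ψ n) - p.1⟫)
      atTop (nhds 0) := by
    simpa using ((hBψm1.sub hBψm2).inner ha0).const_mul b
  have pd1 : Tendsto (fun n => ((1+|b|) * L/2)*‖x (ψ n) - x (ψ n - 1)‖^2) atTop (nhds 0) := by
    simpa using (((hxψ.sub hxψm1).norm.pow 2).const_mul ((1+|b|) * L/2))
  have pd2 : Tendsto (fun n => (|b| * L/2)*‖x (ψ n - 1) - x (ψ n - 2)‖^2) atTop (nhds 0) := by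
    simpa using (((hxψm1.sub hxψm2).norm.pow 2).const_mul (|b| * L/2))
  have hVψ : Tendsto (fun n => Vly B K b τ σ L x y p.1 p.2 (ψ n)) atTop (nhds 0) := by
    have hsum := (((((pA.add pB).sub pS).sub pT1).add pT2).add pd1).add pd2
    simp only [Vly]
    simpa using hsum
  -- the full Lyapunov sequence tends to zero
  have hVanti : Antitone (fun n => Vly B K b τ σ L x y p.1 p.2 (n+2)) := by
    apply antitone_nat_of_succ_le
    intro n
    have h := step p.1 p.2 hsolA hsolC (n+2) (by omega)
    have e : n+1+2 = n+2+1 := by omega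
    simp only [e]
    have h1 := mul_nonneg hγ.le (sq_nonneg ‖x (n+2+1) - x (n+2)‖)
    have h2 := mul_nonneg hβ.le (sq_nonneg ‖y (n+2+1) - y (n+2)‖)
    linarith
  have hVbdd : BddBelow (Set.range fun n => Vly B K b τ σ L x y p.1 p.2 (n+2)) := by
    refine ⟨0, ?_⟩
    rintro z ⟨n, rfl⟩
    exact Vnn p.1 p.2 (n+2)
  have hVinf := tendsto_atTop_ciInf hVanti hVbdd
  have hsub : Tendsto (fun n => Vly B K b τ σ L x y p.1 p.2 ((ψ n - 2) + 2)) atTop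
      (nhds (⨅ n, Vly B K b τ σ L x y p.1 p.2 (n+2))) :=
    hVinf.comp (tendsto_atTop_mono
      (fun n => show id n ≤ ψ n - 2 by simp only [id]; have := hψbig n; omega) tendsto_id)
  have heq : (fun n => Vly B K b τ σ L x y p.1 p.2 ((ψ n - 2) + 2))
      = fun n => Vly B K b τ σ L x y p.1 p.2 (ψ n) := by
    funext n
    congr 1
    have := hψ2 n
    omega
  rw [heq] at hsub
  have hiz : (⨅ n, Vly B K b τ σ L x y p.1 p.2 (n+2)) = 0 :=
    tendsto_nhds_unique hsub hVψ
  rw [hiz] at hVinf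
  have hVlim : Tendsto (fun k => Vly B K b τ σ L x y p.1 p.2 k) atTop (nhds 0) :=
    (tendsto_add_atTop_iff_nat 2).1 hVinf
  -- convergence of the iterates
  have hxsq : Tendsto (fun k =>
      (1/(2*τ) - σ*‖K‖^2/(2*μ) - (1+|b|) * L) * ‖x k - p.1‖^2) atTop (nhds 0) := by
    refine squeeze_zero (fun k => mul_nonneg hγ.le (sq_nonneg _)) (fun k => ?_) hVlim
    have h1 := low p.1 p.2 k
    have h2 := mul_nonneg hβ.le (sq_nonneg ‖y k - p.2‖)
    linarith
  have hysq : Tendsto (fun k => ((1-μ)/(2*σ)) * ‖y k - p.2‖^2) atTop (nhds 0) := by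
    refine squeeze_zero (fun k => mul_nonneg hβ.le (sq_nonneg _)) (fun k => ?_) hVlim
    have h1 := low p.1 p.2 k
    have h2 := mul_nonneg hγ.le (sq_nonneg ‖x k - p.1‖)
    linarith
  have hxsq' : Tendsto (fun k => ‖x k - p.1‖^2) atTop (nhds 0) := by
    have h2 := hxsq.const_mul (1/(2*τ) - σ*‖K‖^2/(2*μ) - (1+|b|) * L)⁻¹
    simp only [mul_zero] at h2
    have h3 : (fun k : ℕ => (1/(2*τ) - σ*‖K‖^2/(2*μ) - (1+|b|) * L)⁻¹ *
        ((1/(2*τ) - σ*‖K‖^2/(2*μ) - (1+|b|) * L) * ‖x k - p.1‖^2))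
        = fun k : ℕ => ‖x k - p.1‖^2 := by
      funext k
      rw [← mul_assoc, inv_mul_cancel₀ hγ.ne', one_mul]
    rwa [h3] at h2
  have hysq' : Tendsto (fun k => ‖y k - p.2‖^2) atTop (nhds 0) := by
    have h2 := hysq.const_mul ((1-μ)/(2*σ))⁻¹
    simp only [mul_zero] at h2
    have h3 : (fun k : ℕ => ((1-μ)/(2*σ))⁻¹ * (((1-μ)/(2*σ)) * ‖y k - p.2‖^2))
        = fun k : ℕ => ‖y k - p.2‖^2 := by
      funext k
      rw [← mul_assoc, inv_mul_cancel₀ hβ.ne', one_mul]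
    rwa [h3] at h2
  have hxlim : Tendsto x atTop (nhds p.1) := by
    have h1 : Tendsto (fun k => x k - p.1) atTop (nhds 0) := by
      rw [tendsto_zero_iff_norm_tendsto_zero]
      have h2 : (fun k => ‖x k - p.1‖) = fun k => Real.sqrt (‖x k - p.1‖^2) :=
        funext fun k => (Real.sqrt_sq (norm_nonneg _)).symm
      rw [h2]
      simpa using hxsq'.sqrt
    have h3 := h1.add (tendsto_const_nhds (x := p.1))
    simpa using h3
  have hylim : Tendsto y atTop (nhds p.2) := by
    have h1 : Tendsto (fun k => y k - p.2) atTop (nhds 0) := by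
      rw [tendsto_zero_iff_norm_tendsto_zero]
      have h2 : (fun k => ‖y k - p.2‖) = fun k => Real.sqrt (‖y k - p.2‖^2) :=
        funext fun k => (Real.sqrt_sq (norm_nonneg _)).symm
      rw [h2]
      simpa using hysq'.sqrt
    have h3 := h1.add (tendsto_const_nhds (x := p.2))
    simpa using h3
  exact ⟨p, hsolA, hsolC, by simpa using hxlim.prodMk_nhds hylim⟩
end
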